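/- arXiv:2412.18502 — 4 statements merged into one kernel-verified Lean document; each statement's English description precedes it below -/
import Mathlib

section
/- Suppose V admits a stream function H. Then every orbit ξ of V belongs to at least one of the following categories: (1) ξ is a closed orbit; (2) ξ is a non-contractible periodic orbit; (3) ξ is asymptotic to Γ, i.e. lim_{t→±∞} dist(ξ(t),Γ) = 0. -/
open MeasureTheory Filter Topology Set Metric Bornology

noncomputable section

/-- The plane `ℝ²` with the Euclidean norm. -/
abbrev E2 : Type := EuclideanSpace ℝ (Fin 2)

/-- The vector of `ℝ²` with integer coordinates `k`. -/
def intVec (k : Fin 2 → ℤ) : E2 := WithLp.toLp 2 (fun i => (k i : ℝ))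

/-- `ℤ²`-periodicity of a map on `ℝ²`. -/
def ZPeriodic {α : Type*} (V : E2 → α) : Prop :=
  ∀ (x : E2) (k : Fin 2 → ℤ), V (x + intVec k) = V x

/-- The stagnation set `Γ = {x | V x = 0}`. -/
def Stag (V : E2 → E2) : Set E2 := {x | V x = 0}

/-- `ξ` is an orbit of the flow `V`. -/
def IsOrbit (V : E2 → E2) (ξ : ℝ → E2) : Prop := ∀ t : ℝ, HasDerivAt ξ (V (ξ t)) t

/-- `ξ` is the orbit of `V` passing through `x` at time `0`. -/
def IsOrbitThrough (V : E2 → E2) (ξ : ℝ → E2) (x : E2) : Prop := IsOrbit V ξ ∧ ξ 0 = x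

/-- closed orbit. -/
def IsClosedOrbit (V : E2 → E2) (ξ : ℝ → E2) : Prop :=
  IsOrbit V ξ ∧ ∃ T > (0:ℝ), ξ T = ξ 0

/-- non-contractible periodic orbit: `ξ T − ξ 0 ∈ ℤ² ∖ {0}` for some `T > 0`. -/
def IsNoncontractibleOrbit (V : E2 → E2) (ξ : ℝ → E2) : Prop :=
  IsOrbit V ξ ∧ ∃ T > (0:ℝ), ∃ k : Fin 2 → ℤ, k ≠ 0 ∧ ξ T - ξ 0 = intVec k

/-- an orbit asymptotic to the stagnation set: `dist(ξ t, Γ) → 0` as `t → ±∞`. -/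
def AsympToStag (V : E2 → E2) (ξ : ℝ → E2) : Prop :=
  Tendsto (fun t => infDist (ξ t) (Stag V)) atTop (nhds 0) ∧
  Tendsto (fun t => infDist (ξ t) (Stag V)) atBot (nhds 0)

/-- the closed region enclosed by a curve with image `J`: the complement of the
unbounded connected component of `ℝ² ∖ J`. -/
def encl (J : Set E2) : Set E2 :=
  J ∪ {x | x ∉ J ∧ IsBounded (connectedComponentIn Jᶜ x)}

/-- the swirls (closed orbits) of `V` have size uniformly bounded by `M`. -/
def SwirlBound (V : E2 → E2) (M : ℝ) : Prop :=
  ∀ ξ : ℝ → E2, IsClosedOrbit V ξ → diam (range ξ) ≤ M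

/-- a set is invariant under the flow of `V`. -/
def FlowInvariant (V : E2 → E2) (E : Set E2) : Prop :=
  ∀ x ∈ E, ∀ ξ : ℝ → E2, IsOrbitThrough V ξ x → range ξ ⊆ E

/-- a cell of the flow `V`. -/
def IsCell (V : E2 → E2) (S : Set E2) : Prop :=
  IsClosed S ∧ ∃ ξ : ℕ → ℝ → E2,
    (∀ m, IsClosedOrbit V (ξ m)) ∧
    (∀ m, encl (range (ξ m)) ⊂ encl (range (ξ (m+1)))) ∧
    S = closure (⋃ m, encl (range (ξ m))) ∧
    (frontier S ∩ Stag V).Nonempty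

/-- a maximal cell. -/
def IsMaximalCell (V : E2 → E2) (S : Set E2) : Prop :=
  IsCell V S ∧ ∀ S' : Set E2, IsCell V S' → ¬ S ⊂ S'

/-- `H` is a stream function for `V`: `ℤ²`-periodic, differentiable with Lipschitz
gradient, and `V = (−H_{x₂}, H_{x₁})`. -/
def IsStreamFunction (V : E2 → E2) (H : E2 → ℝ) : Prop :=
  ZPeriodic H ∧ Differentiable ℝ H ∧
  (∃ L : NNReal, LipschitzWith L (fun x => gradient H x)) ∧
  (∀ x : E2, V x 0 = - fderiv ℝ H x (EuclideanSpace.single 1 1) ∧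
             V x 1 = fderiv ℝ H x (EuclideanSpace.single 0 1))

/-- an `A`-admissible control path on `[0,T]`: Lipschitz with
`|γ' + A·V(γ)| ≤ 1` a.e. on `[0,T]`. -/
def IsAdmissible (V : E2 → E2) (A T : ℝ) (γ : ℝ → E2) : Prop :=
  (∃ L : NNReal, LipschitzOnWith L γ (Icc 0 T)) ∧
  ∀ᵐ t ∂(volume : Measure ℝ), t ∈ Icc (0:ℝ) T →
    ∃ g : E2, HasDerivAt γ g t ∧ ‖g + A • V (γ t)‖ ≤ 1

/-- turbulent flame speed via the control representation of the inviscid G-equation. -/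
def sT (V : E2 → E2) (p : E2) (A : ℝ) : ℝ :=
  limsup (fun t : ℝ =>
    (1 / t) * sSup {r : ℝ | ∃ γ : ℝ → E2, IsAdmissible V A t γ ∧ γ 0 = 0 ∧
      r = - (inner ℝ p (γ t) : ℝ)}) atTop

/-- `β₊` associated to the transversal family `η`. -/
def betaPlus (H : E2 → ℝ) (η : ℝ → ℝ → E2) : ℝ :=
  sInf ((fun t => H (η t 1)) '' Icc (-1:ℝ) 1)

/-- `β₋` associated to the transversal family `η`. -/
def betaMinus (H : E2 → ℝ) (η : ℝ → ℝ → E2) : ℝ :=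
  sSup ((fun t => H (η t (-1))) '' Icc (-1:ℝ) 1)

/-- `U_x = Φ((−1,1)×(β₋,β₊))`. -/
def Uset (Φ : ℝ → ℝ → E2) (a b : ℝ) : Set E2 := image2 Φ (Ioo (-1:ℝ) 1) (Ioo a b)

/-- the transversal family `η` through the orbit `ξ`: `η t` is the gradient flow
of `H` with `η t 0 = ξ t`. -/
def IsTransversalFamily (H : E2 → ℝ) (ξ : ℝ → E2) (η : ℝ → ℝ → E2) : Prop :=
  ∀ t : ℝ, η t 0 = ξ t ∧ ∀ s : ℝ, HasDerivAt (η t) (gradient H (η t s)) s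

/-- The defining property of the local coordinate map `Φ` on a rectangle
`T × B`: `Φ t β` is the (unique) point of the transversal curve `η t` at level
`H = β`. -/
def IsPhiMap (H : E2 → ℝ) (η : ℝ → ℝ → E2) (Φ : ℝ → ℝ → E2) (T B : Set ℝ) : Prop :=
  ∀ t ∈ T, ∀ β ∈ B, H (Φ t β) = β ∧ ∃ s : ℝ, Φ t β = η t s

open scoped RealInnerProductSpace

set_option maxHeartbeats 2000000

section Statement2Aux

lemma grad_inner (H : E2 → ℝ) (x y : E2) : ⟪gradient H x, y⟫ = fderiv ℝ H x y :=
  @InnerProductSpace.toDual_symm_apply ℝ E2 _ _ _ _ y (fderiv ℝ H x)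

lemma inner_coords (x y : E2) : ⟪x, y⟫ = x 0 * y 0 + x 1 * y 1 := by
  simp [PiLp.inner_apply, Fin.sum_univ_two]; ring

lemma norm_sq_coords (x : E2) : ‖x‖^2 = x 0^2 + x 1^2 := by
  rw [← real_inner_self_eq_norm_sq]; rw [inner_coords]; ring

lemma grad_coords {V : E2 → E2} {H : E2 → ℝ} (hH : IsStreamFunction V H) (x : E2) :
    V x 0 = -(gradient H x 1) ∧ V x 1 = gradient H x 0 := by
  have h0 : fderiv ℝ H x (EuclideanSpace.single 0 1) = gradient H x 0 := by
    rw [← grad_inner, inner_coords]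
    simp [EuclideanSpace.single_apply]
  have h1 : fderiv ℝ H x (EuclideanSpace.single 1 1) = gradient H x 1 := by
    rw [← grad_inner, inner_coords]
    simp [EuclideanSpace.single_apply]
  obtain ⟨hA, hB⟩ := hH.2.2.2 x
  exact ⟨by rw [hA, h1], by rw [hB, h0]⟩

lemma grad_inner_V {V : E2 → E2} {H : E2 → ℝ} (hH : IsStreamFunction V H) (x : E2) :
    ⟪gradient H x, V x⟫ = 0 := by
  obtain ⟨h0, h1⟩ := grad_coords hH x
  rw [inner_coords, h0, h1]; ring

lemma H_const_orbit {V : E2 → E2} {H : E2 → ℝ} (hH : IsStreamFunction V H)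
    {ζ : ℝ → E2} (hζ : IsOrbit V ζ) (t : ℝ) : H (ζ t) = H (ζ 0) := by
  have hd : ∀ s : ℝ, HasDerivAt (fun u => H (ζ u)) 0 s := by
    intro s
    have := ((hH.2.1 (ζ s)).hasFDerivAt).comp_hasDerivAt s (hζ s)
    have hz : fderiv ℝ H (ζ s) (V (ζ s)) = 0 := by
      rw [← grad_inner]; exact grad_inner_V hH (ζ s)
    rwa [hz] at this
  exact is_const_of_deriv_eq_zero (fun s => (hd s).differentiableAt)
    (fun s => (hd s).deriv) t 0

lemma orbit_unique {V : E2 → E2} {K : NNReal} (hLip : LipschitzWith K V)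
    {f g : ℝ → E2} (hf : IsOrbit V f) (hg : IsOrbit V g) {a : ℝ}
    (h : f a = g a) (b : ℝ) : f b = g b := by
  have hcf : Continuous f := by
    rw [continuous_iff_continuousAt]; exact fun t => (hf t).continuousAt
  have hcg : Continuous g := by
    rw [continuous_iff_continuousAt]; exact fun t => (hg t).continuousAt
  have hb : b ∈ Icc (min a b - 1) (max a b + 1) := by
    constructor <;> [linarith [min_le_right a b]; linarith [le_max_right a b]]
  refine ODE_solution_unique_of_mem_Icc (v := fun _ x => V x) (s := fun _ => univ)
    (K := K) (fun _ _ => hLip.lipschitzOnWith (s := univ)) ?_ hcf.continuousOn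
    (fun t _ => hf t) (fun _ _ => mem_univ _) hcg.continuousOn
    (fun t _ => hg t) (fun _ _ => mem_univ _) h hb
  constructor <;> [linarith [min_le_left a b]; linarith [le_max_left a b]]

lemma stay {ζ w : ℝ → E2} (hζ : ∀ t, HasDerivAt ζ (w t) t) {x : E2} {r M δ Δ t₀ : ℝ}
    (hM : 0 ≤ M) (hΔ : 0 ≤ Δ)
    (hbound : ∀ t, ‖ζ t - x‖ ≤ r → ‖w t‖ ≤ M) (h0 : ‖ζ t₀ - x‖ ≤ δ)
    (hsmall : δ + M * Δ < r) :
    ∀ t ∈ Icc t₀ (t₀ + Δ), ‖ζ t - x‖ ≤ δ + M * (t - t₀) := by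
  set ρ : ℝ → ℝ := fun t => ‖ζ t - x‖ with hρ
  have hδr : δ < r := by nlinarith
  have hcont : Continuous ρ := by
    have : Continuous ζ := by
      rw [continuous_iff_continuousAt]; exact fun t => (hζ t).continuousAt
    exact (this.sub continuous_const).norm
  -- mean value estimate on a subinterval where ρ ≤ r
  have mvt : ∀ σ ∈ Icc t₀ (t₀ + Δ), (∀ t ∈ Icc t₀ σ, ρ t ≤ r) →
      ρ σ ≤ δ + M * (σ - t₀) := by
    intro σ hσ hin
    have hσ0 : t₀ ≤ σ := hσ.1
    have key : ‖ζ σ - ζ t₀‖ ≤ M * ‖σ - t₀‖ := by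
      refine Convex.norm_image_sub_le_of_norm_hasDerivWithin_le
        (f := ζ) (f' := w) (s := Icc t₀ σ)
        (fun u hu => (hζ u).hasDerivWithinAt) (fun u hu => hbound u (hin u hu))
        (convex_Icc _ _) (left_mem_Icc.2 hσ0) (right_mem_Icc.2 hσ0)
    have : ρ σ ≤ ρ t₀ + ‖ζ σ - ζ t₀‖ := by
      have h2 : ζ σ - x = (ζ t₀ - x) + (ζ σ - ζ t₀) := by abel
      calc ρ σ = ‖(ζ t₀ - x) + (ζ σ - ζ t₀)‖ := by rw [hρ]; rw [← h2]
        _ ≤ ρ t₀ + ‖ζ σ - ζ t₀‖ := norm_add_le _ _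
    calc ρ σ ≤ ρ t₀ + ‖ζ σ - ζ t₀‖ := this
      _ ≤ δ + M * ‖σ - t₀‖ := add_le_add h0 key
      _ = δ + M * (σ - t₀) := by rw [Real.norm_eq_abs, abs_of_nonneg (by linarith)]
  -- show ρ ≤ r on the whole interval
  have hall : ∀ t ∈ Icc t₀ (t₀ + Δ), ρ t ≤ r := by
    by_contra hc
    push_neg at hc
    obtain ⟨t₁, ht₁, ht₁r⟩ := hc
    set B : Set ℝ := {t ∈ Icc t₀ (t₀ + Δ) | r ≤ ρ t} with hB
    have hBne : B.Nonempty := ⟨t₁, ht₁, ht₁r.le⟩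
    have hBclosed : IsClosed B := by
      have : B = Icc t₀ (t₀ + Δ) ∩ ρ ⁻¹' (Ici r) := by
        ext t; simp only [hB, Set.mem_setOf_eq, Set.mem_inter_iff, Set.mem_preimage, Set.mem_Ici]
      rw [this]
      exact isClosed_Icc.inter (isClosed_Ici.preimage hcont)
    have hBbdd : BddBelow B := ⟨t₀, fun t ht => ht.1.1⟩
    set σ := sInf B with hσdef
    have hσB : σ ∈ B := hBclosed.csInf_mem hBne hBbdd
    have hσΔ : σ ∈ Icc t₀ (t₀ + Δ) := hσB.1
    have hσr : r ≤ ρ σ := hσB.2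
    have hσgt : t₀ < σ := by
      rcases lt_or_eq_of_le hσΔ.1 with h | h
      · exact h
      · exfalso; rw [← h] at hσr; exact absurd (h0.trans_lt hδr) (not_lt.2 hσr)
    have hlt : ∀ t ∈ Ico t₀ σ, ρ t < r := by
      intro t ht
      by_contra hge
      push_neg at hge
      have : t ∈ B := ⟨⟨ht.1, le_trans ht.2.le hσΔ.2⟩, hge⟩
      exact absurd (csInf_le hBbdd this) (not_le.2 ht.2)
    -- by continuity, ρ σ ≤ r
    have hρσ : ρ σ ≤ r := by
      have hne : (𝓝[<] σ).NeBot := inferInstance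
      have htend : Tendsto ρ (𝓝[<] σ) (𝓝 (ρ σ)) :=
        (hcont.tendsto σ).mono_left nhdsWithin_le_nhds
      refine le_of_tendsto htend ?_
      filter_upwards [Ioo_mem_nhdsLT_of_mem ⟨hσgt, le_refl σ⟩] with t ht
      exact (hlt t ⟨ht.1.le, ht.2⟩).le
    have : ρ σ ≤ δ + M * (σ - t₀) := by
      refine mvt σ hσΔ ?_
      intro t ht
      rcases lt_or_eq_of_le ht.2 with h | h
      · exact (hlt t ⟨ht.1, h⟩).le
      · rw [h]; exact hρσ
    have : ρ σ < r := by nlinarith [hσΔ.2, hσΔ.1]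
    linarith
  intro t ht
  exact mvt t ht (fun u hu => hall u ⟨hu.1, le_trans hu.2 ht.2⟩)

lemma crossing {V : E2 → E2} {ζ : ℝ → E2} (hζ : IsOrbit V ζ)
    {x : E2} {r δ : ℝ} (hm : 0 < ‖V x‖) (hδ : 0 < δ) (h8 : 8 * δ ≤ r)
    (hb1 : ∀ y : E2, ‖y - x‖ ≤ r → ‖V x‖^2 / 2 ≤ ⟪V y, V x⟫)
    (hb2 : ∀ y : E2, ‖y - x‖ ≤ r → ‖V y‖ ≤ 3 * ‖V x‖ / 2)
    {t₀ : ℝ} (h0 : ‖ζ t₀ - x‖ ≤ δ) :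
    ∃ s ∈ Icc (t₀ - 4 * δ / ‖V x‖) (t₀ + 4 * δ / ‖V x‖),
      ‖ζ s - x‖ ≤ 7 * δ ∧ ⟪ζ s - x, V x⟫ = 0 := by
  set m := ‖V x‖ with hmdef
  set Δ : ℝ := 4 * δ / m with hΔdef
  have hΔpos : 0 < Δ := by positivity
  have hMΔ : 3 * m / 2 * Δ = 6 * δ := by
    field_simp [hΔdef]; rw [hΔdef]; field_simp; ring
  have hsmall : δ + 3 * m / 2 * Δ < r := by rw [hMΔ]; linarith
  -- forward stay
  have hfwd : ∀ t ∈ Icc t₀ (t₀ + Δ), ‖ζ t - x‖ ≤ 7 * δ := by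
    intro t ht
    have := stay (fun t => hζ t) (by positivity) hΔpos.le
      (fun t h => hb2 _ h) h0 hsmall t ht
    have h2 : 3 * m / 2 * (t - t₀) ≤ 3 * m / 2 * Δ := by
      have : t - t₀ ≤ Δ := by linarith [ht.2]
      nlinarith
    nlinarith
  -- backward stay via time reversal
  have hbwd : ∀ t ∈ Icc (t₀ - Δ) t₀, ‖ζ t - x‖ ≤ 7 * δ := by
    have hrev : ∀ t : ℝ, HasDerivAt (fun u => ζ (-u)) ((-1 : ℝ) • V (ζ (-t))) t := by
      intro t
      exact (hζ (-t)).scomp t (hasDerivAt_neg t)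
    have := stay hrev (x := x) (r := r) (M := 3 * m / 2) (δ := δ) (Δ := Δ) (t₀ := -t₀)
      (by positivity) hΔpos.le
      (fun t h => by
        rw [norm_smul]; simp only [norm_neg, norm_one]
        simpa using hb2 _ h)
      (by simpa using h0) hsmall
    intro t ht
    have h1 : -t ∈ Icc (-t₀) (-t₀ + Δ) := by
      constructor <;> [linarith [ht.2]; linarith [ht.1]]
    have h2 := this (-t) h1
    have h3 : 3 * m / 2 * (-t - -t₀) ≤ 3 * m / 2 * Δ := by
      have : -t - -t₀ ≤ Δ := by linarith [h1.2]
      nlinarith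
    simp only [neg_neg] at h2
    nlinarith
  have hball : ∀ t ∈ Icc (t₀ - Δ) (t₀ + Δ), ‖ζ t - x‖ ≤ 7 * δ := by
    intro t ht
    rcases le_total t t₀ with h | h
    · exact hbwd t ⟨ht.1, h⟩
    · exact hfwd t ⟨h, ht.2⟩
  -- the inner product function g
  set g : ℝ → ℝ := fun s => ⟪ζ s - x, V x⟫ with hg
  have hgd : ∀ s : ℝ, HasDerivAt g (⟪V (ζ s), V x⟫) s := by
    intro s
    have h1 : HasDerivAt (fun u => ζ u - x) (V (ζ s)) s := (hζ s).sub_const x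
    have h2 : HasDerivAt (fun _ : ℝ => V x) 0 s := hasDerivAt_const s (V x)
    have := HasDerivAt.inner ℝ h1 h2
    simpa only [inner_zero_right, zero_add] using this
  -- monotonicity of ψ
  set ψ : ℝ → ℝ := fun s => g s - m^2 / 2 * s with hψ
  have hψd : ∀ s : ℝ, HasDerivAt ψ (⟪V (ζ s), V x⟫ - m^2 / 2) s := by
    intro s
    have := (hgd s).sub ((hasDerivAt_id s).const_mul (m^2/2))
    exact this.congr_deriv (by ring)
  have hψmono : MonotoneOn ψ (Icc (t₀ - Δ) (t₀ + Δ)) := by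
    refine monotoneOn_of_hasDerivWithinAt_nonneg (convex_Icc _ _)
      (f' := fun s => ⟪V (ζ s), V x⟫ - m^2 / 2) ?_ ?_ ?_
    · intro s hs
      exact (hψd s).continuousAt.continuousWithinAt
    · intro s hs
      exact (hψd s).hasDerivWithinAt
    · intro s hs
      rw [interior_Icc] at hs
      have hsball : ‖ζ s - x‖ ≤ r := by
        have := hball s ⟨hs.1.le, hs.2.le⟩
        linarith
      have := hb1 _ hsball
      linarith
  -- endpoint estimates
  have hCS : |g t₀| ≤ δ * m := by
    have := abs_real_inner_le_norm (ζ t₀ - x) (V x)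
    have h2 : ‖ζ t₀ - x‖ * ‖V x‖ ≤ δ * m := by
      rw [← hmdef]; nlinarith
    exact le_trans this h2
  have hmem1 : t₀ - Δ ∈ Icc (t₀ - Δ) (t₀ + Δ) := by constructor <;> linarith
  have hmem2 : t₀ ∈ Icc (t₀ - Δ) (t₀ + Δ) := by constructor <;> linarith
  have hmem3 : t₀ + Δ ∈ Icc (t₀ - Δ) (t₀ + Δ) := by constructor <;> linarith
  have hmΔ : m^2 / 2 * Δ = 2 * δ * m := by
    field_simp [hΔdef]; rw [hΔdef]; field_simp; ring
  have hgplus : 0 ≤ g (t₀ + Δ) := by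
    have := hψmono hmem2 hmem3 (by linarith)
    simp only [hψ] at this
    have habs := abs_le.1 hCS
    nlinarith
  have hgminus : g (t₀ - Δ) ≤ 0 := by
    have := hψmono hmem1 hmem2 (by linarith)
    simp only [hψ] at this
    have habs := abs_le.1 hCS
    nlinarith
  -- IVT
  have hgc : ContinuousOn g (Icc (t₀ - Δ) (t₀ + Δ)) := by
    intro s _
    exact (hgd s).continuousAt.continuousWithinAt
  have h0mem : (0:ℝ) ∈ Icc (g (t₀ - Δ)) (g (t₀ + Δ)) := ⟨hgminus, hgplus⟩
  obtain ⟨s, hs, hgs⟩ := intermediate_value_Icc (by linarith : t₀ - Δ ≤ t₀ + Δ) hgc h0mem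
  exact ⟨s, hs, by
    have := hball s hs
    exact ⟨this, hgs⟩⟩

set_option maxHeartbeats 2000000 in
lemma transversal_inj {V : E2 → E2} {H : E2 → ℝ} (hH : IsStreamFunction V H)
    {L : NNReal} (hL : LipschitzWith L (fun x => gradient H x))
    {x : E2} {r : ℝ} (hm : 0 < ‖V x‖) (hLr : (L : ℝ) * r ≤ ‖V x‖ / 2)
    {y₁ y₂ : E2} (h₁ : ‖y₁ - x‖ ≤ r) (h₂ : ‖y₂ - x‖ ≤ r)
    (p₁ : ⟪y₁ - x, V x⟫ = 0) (p₂ : ⟪y₂ - x, V x⟫ = 0)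
    (hHeq : H y₁ = H y₂) : y₁ = y₂ := by
  by_contra hne
  set w : E2 := y₂ - y₁ with hw
  have hwne : w ≠ 0 := sub_ne_zero.2 (Ne.symm hne)
  have hwpos : 0 < ‖w‖ := norm_pos_iff.2 hwne
  set φ : ℝ → ℝ := fun τ => H (y₁ + τ • w) with hφ
  have hline : ∀ τ : ℝ, HasDerivAt (fun τ : ℝ => y₁ + τ • w) w τ := by
    intro τ
    simpa using ((hasDerivAt_id τ).smul_const w).const_add y₁
  have hφd : ∀ τ : ℝ, HasDerivAt φ (⟪gradient H (y₁ + τ • w), w⟫) τ := by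
    intro τ
    have := ((hH.2.1 (y₁ + τ • w)).hasFDerivAt).comp_hasDerivAt τ (hline τ)
    rwa [grad_inner]
  have hφ01 : φ 0 = φ 1 := by
    simp only [hφ, zero_smul, add_zero, one_smul, hw]
    rw [hHeq]; congr 1; abel
  obtain ⟨τ₀, hτ₀, hz0⟩ := exists_hasDerivAt_eq_zero (f := φ)
    (f' := fun τ => ⟪gradient H (y₁ + τ • w), w⟫) one_pos
    (fun τ _ => (hφd τ).continuousAt.continuousWithinAt) hφ01
    (fun τ _ => hφd τ)
  set z : E2 := y₁ + τ₀ • w with hz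
  have hzball : ‖z - x‖ ≤ r := by
    have hdecomp : z - x = (1 - τ₀) • (y₁ - x) + τ₀ • (y₂ - x) := by
      simp only [hz, hw, smul_sub, sub_smul, one_smul]
      abel
    calc ‖z - x‖ = ‖(1 - τ₀) • (y₁ - x) + τ₀ • (y₂ - x)‖ := by rw [hdecomp]
      _ ≤ ‖(1 - τ₀) • (y₁ - x)‖ + ‖τ₀ • (y₂ - x)‖ := norm_add_le _ _
      _ = |1 - τ₀| * ‖y₁ - x‖ + |τ₀| * ‖y₂ - x‖ := by
          rw [norm_smul, norm_smul, Real.norm_eq_abs, Real.norm_eq_abs]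
      _ ≤ (1 - τ₀) * r + τ₀ * r := by
          rw [abs_of_nonneg (by linarith [hτ₀.2]), abs_of_nonneg hτ₀.1.le]
          have h1 : 0 ≤ 1 - τ₀ := by linarith [hτ₀.2]
          have h2 : 0 ≤ τ₀ := hτ₀.1.le
          gcongr
      _ = r := by ring
  -- perpendicularity of w to V x
  have hwperp : ⟪w, V x⟫ = 0 := by
    have : w = (y₂ - x) - (y₁ - x) := by rw [hw]; abel
    rw [this, inner_sub_left, p₁, p₂]; ring
  -- 2D identity : |⟪∇H x, w⟫| = ‖V x‖ ‖w‖
  have hid : ⟪gradient H x, w⟫ ^ 2 = ‖V x‖^2 * ‖w‖^2 := by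
    obtain ⟨hv0, hv1⟩ := grad_coords hH x
    rw [inner_coords] at hwperp ⊢
    rw [norm_sq_coords, norm_sq_coords]
    have hG0 : gradient H x 0 = V x 1 := hv1.symm
    have hG1 : gradient H x 1 = -(V x 0) := by rw [hv0]; ring
    rw [hG0, hG1]
    nlinarith [hwperp]
  -- Lipschitz estimate
  have hLip : ‖gradient H x - gradient H z‖ ≤ (L : ℝ) * r := by
    have := hL.dist_le_mul x z
    rw [dist_eq_norm] at this
    calc ‖gradient H x - gradient H z‖ ≤ (L : ℝ) * ‖x - z‖ := this
      _ ≤ (L : ℝ) * r := by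
          have : ‖x - z‖ ≤ r := by rwa [norm_sub_rev]
          exact mul_le_mul_of_nonneg_left this L.2
  have hkey : |⟪gradient H x, w⟫| ≤ ‖V x‖ / 2 * ‖w‖ := by
    have hsplit : ⟪gradient H x, w⟫ = ⟪gradient H x - gradient H z, w⟫ := by
      rw [inner_sub_left, hz0]; ring
    rw [hsplit]
    calc |⟪gradient H x - gradient H z, w⟫| ≤ ‖gradient H x - gradient H z‖ * ‖w‖ :=
        abs_real_inner_le_norm _ _
      _ ≤ (L : ℝ) * r * ‖w‖ := by gcongr
      _ ≤ ‖V x‖ / 2 * ‖w‖ := by gcongr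
  have hsq : ⟪gradient H x, w⟫^2 ≤ (‖V x‖ / 2 * ‖w‖)^2 := by
    have h1 : (0:ℝ) ≤ ‖V x‖ / 2 * ‖w‖ := by positivity
    nlinarith [abs_nonneg (⟪gradient H x, w⟫), sq_abs (⟪gradient H x, w⟫)]
  rw [hid] at hsq
  have hp : 0 < ‖V x‖ * ‖w‖ := mul_pos hm hwpos
  nlinarith [hp, mul_pos hp hp]

lemma intVec_zero : intVec 0 = 0 := by
  ext i; simp [intVec]

lemma intVec_neg (k : Fin 2 → ℤ) : intVec (-k) = -intVec k := by
  ext i; simp [intVec]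

lemma intVec_sub (k l : Fin 2 → ℤ) : intVec (k - l) = intVec k - intVec l := by
  ext i; simp [intVec]

lemma per_sub {α : Type*} {f : E2 → α} (hf : ZPeriodic f) (x : E2) (k : Fin 2 → ℤ) :
    f (x - intVec k) = f x := by
  have := hf (x - intVec k) k
  rw [sub_add_cancel] at this
  exact this.symm

lemma orbit_sub_intVec {V : E2 → E2} (hper : ZPeriodic V) {ξ : ℝ → E2}
    (hξ : IsOrbit V ξ) (c : Fin 2 → ℤ) : IsOrbit V (fun t => ξ t - intVec c) := by
  intro t
  have h1 : V (ξ t - intVec c) = V (ξ t) := per_sub hper (ξ t) c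
  rw [h1]
  exact (hξ t).sub_const (intVec c)

lemma infDist_translate {V : E2 → E2} (hper : ZPeriodic V) (x : E2) (k : Fin 2 → ℤ) :
    infDist (x + intVec k) (Stag V) = infDist x (Stag V) := by
  have hiso : Isometry (fun y : E2 => y + intVec k) :=
    Isometry.of_dist_eq (fun a b => by rw [dist_add_right])
  have himg : (fun y : E2 => y + intVec k) '' (Stag V) = Stag V := by
    ext y
    constructor
    · rintro ⟨z, hz, rfl⟩
      show V (z + intVec k) = 0
      rw [hper z k]; exact hz
    · intro hy
      refine ⟨y - intVec k, ?_, by show y - intVec k + intVec k = y; rw [sub_add_cancel]⟩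
      show V (y - intVec k) = 0
      rw [per_sub hper y k]; exact hy
  conv_lhs => rw [← himg]
  exact infDist_image hiso

lemma shift_orbit {V : E2 → E2} {K : NNReal} (hLip : LipschitzWith K V)
    (hper : ZPeriodic V) {ξ : ℝ → E2} (hξ : IsOrbit V ξ) {t₁ Δt : ℝ}
    (hΔt : 0 < Δt) {c : Fin 2 → ℤ} (h : ξ (t₁ + Δt) - ξ t₁ = intVec c) :
    IsClosedOrbit V ξ ∨ IsNoncontractibleOrbit V ξ := by
  set g : ℝ → E2 := fun t => ξ (t + Δt) - intVec c with hg
  have hgo : IsOrbit V g := by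
    intro t
    have h1 : HasDerivAt (fun t => ξ (t + Δt)) ((1:ℝ) • V (ξ (t + Δt))) t :=
      (hξ (t + Δt)).scomp t ((hasDerivAt_id t).add_const Δt)
    rw [one_smul] at h1
    have h2 : V (ξ (t + Δt)) = V (g t) := by
      have : g t + intVec c = ξ (t + Δt) := by
        show ξ (t + Δt) - intVec c + intVec c = ξ (t + Δt)
        rw [sub_add_cancel]
      rw [← this, hper]
    rw [h2] at h1
    exact h1.sub_const (intVec c)
  have heq : g t₁ = ξ t₁ := by
    show ξ (t₁ + Δt) - intVec c = ξ t₁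
    rw [← h, sub_sub_cancel]
  have h0 := orbit_unique hLip hgo hξ heq 0
  have hfin : ξ Δt - ξ 0 = intVec c := by
    have h0' : ξ Δt - intVec c = ξ 0 := by
      have : g 0 = ξ (0 + Δt) - intVec c := rfl
      rw [this, zero_add] at h0
      exact h0
    rw [← h0', sub_sub_cancel]
  by_cases hc : c = 0
  · left
    refine ⟨hξ, Δt, hΔt, ?_⟩
    rw [hc, intVec_zero] at hfin
    exact sub_eq_zero.1 hfin
  · right
    exact ⟨hξ, Δt, hΔt, c, hc, hfin⟩

set_option maxHeartbeats 2000000 in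
lemma engine {V : E2 → E2} {K : NNReal} (hLip : LipschitzWith K V) (hper : ZPeriodic V)
    {H : E2 → ℝ} (hH : IsStreamFunction V H) {ξ : ℝ → E2} (hξ : IsOrbit V ξ)
    {ε : ℝ} (hε : 0 < ε) (T : ℕ → ℝ)
    (hT : ∀ n : ℕ, (n:ℝ) ≤ |T n|) (hd : ∀ n, ε ≤ infDist (ξ (T n)) (Stag V)) :
    IsClosedOrbit V ξ ∨ IsNoncontractibleOrbit V ξ := by
  classical
  set k : ℕ → Fin 2 → ℤ := fun n i => ⌊ξ (T n) i⌋ with hk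
  set y : ℕ → E2 := fun n => ξ (T n) - intVec (k n) with hy
  have hyc : ∀ (n : ℕ) (i : Fin 2), y n i = ξ (T n) i - ((⌊ξ (T n) i⌋ : ℤ) : ℝ) :=
    fun n i => by simp [hy, hk, intVec]
  have hynorm : ∀ n, ‖y n‖ ≤ 2 := by
    intro n
    have h0 := Int.floor_le (ξ (T n) 0)
    have h1 := Int.lt_floor_add_one (ξ (T n) 0)
    have h2 := Int.floor_le (ξ (T n) 1)
    have h3 := Int.lt_floor_add_one (ξ (T n) 1)
    have hsq : ‖y n‖^2 ≤ 4 := by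
      rw [norm_sq_coords, hyc n 0, hyc n 1]; nlinarith
    nlinarith [norm_nonneg (y n)]
  have hymem : ∀ n, y n ∈ closedBall (0 : E2) 2 := by
    intro n; rw [mem_closedBall_zero_iff]; exact hynorm n
  obtain ⟨x₀, hx₀mem, φ, hφmono, hφtend⟩ :=
    (isCompact_closedBall (0:E2) 2).tendsto_subseq hymem
  -- distance of y n to the stagnation set
  have hyd : ∀ n, ε ≤ infDist (y n) (Stag V) := by
    intro n
    have h1 := infDist_translate hper (y n) (k n)
    have h2 : y n + intVec (k n) = ξ (T n) := by
      show ξ (T n) - intVec (k n) + intVec (k n) = ξ (T n)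
      rw [sub_add_cancel]
    rw [h2] at h1
    rw [← h1]
    exact hd n
  have hx₀d : ε ≤ infDist x₀ (Stag V) := by
    have htend2 : Tendsto (fun n => infDist (y (φ n)) (Stag V)) atTop
        (𝓝 (infDist x₀ (Stag V))) :=
      ((continuous_infDist_pt (Stag V)).tendsto x₀).comp hφtend
    exact ge_of_tendsto htend2 (Eventually.of_forall fun n => hyd (φ n))
  have hVx₀ : V x₀ ≠ 0 := by
    intro hV0
    have : infDist x₀ (Stag V) = 0 := infDist_zero_of_mem hV0
    rw [this] at hx₀d; linarith
  set m := ‖V x₀‖ with hm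
  have hmpos : 0 < m := norm_pos_iff.2 hVx₀
  obtain ⟨L, hLG⟩ := hH.2.2.1
  set r : ℝ := m / (2 * ((K:ℝ) + (L:ℝ) + 1)) with hr
  have hden : (0:ℝ) < 2 * ((K:ℝ) + (L:ℝ) + 1) := by positivity
  have hrpos : 0 < r := by positivity
  have hr2 : ((K:ℝ) + (L:ℝ) + 1) * r = m / 2 := by
    rw [hr]; field_simp
  have hL0 : (0:ℝ) ≤ (L:ℝ) := L.2
  have hK0 : (0:ℝ) ≤ (K:ℝ) := K.2
  have hKr : (K:ℝ) * r ≤ m / 2 := by nlinarith [mul_nonneg hL0 hrpos.le, hrpos]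
  have hLr : (L:ℝ) * r ≤ m / 2 := by nlinarith [mul_nonneg hK0 hrpos.le, hrpos]
  -- velocity bounds on the ball
  have hVnear : ∀ z : E2, ‖z - x₀‖ ≤ r → ‖V z - V x₀‖ ≤ m / 2 := by
    intro z hz
    have h1 := hLip.dist_le_mul z x₀
    rw [dist_eq_norm, dist_eq_norm] at h1
    calc ‖V z - V x₀‖ ≤ (K:ℝ) * ‖z - x₀‖ := h1
      _ ≤ (K:ℝ) * r := by gcongr
      _ ≤ m / 2 := hKr
  have hb1 : ∀ z : E2, ‖z - x₀‖ ≤ r → m^2 / 2 ≤ ⟪V z, V x₀⟫ := by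
    intro z hz
    have h1 := hVnear z hz
    have h2 : ⟪V z - V x₀, V x₀⟫ = ⟪V z, V x₀⟫ - ⟪V x₀, V x₀⟫ := inner_sub_left _ _ _
    have h3 : ⟪V x₀, V x₀⟫ = m^2 := real_inner_self_eq_norm_sq (V x₀)
    have h4 : |⟪V z - V x₀, V x₀⟫| ≤ ‖V z - V x₀‖ * m := by
      have := abs_real_inner_le_norm (V z - V x₀) (V x₀)
      rwa [← hm] at this
    have h5 : ‖V z - V x₀‖ * m ≤ m / 2 * m := by nlinarith
    have h6 := abs_le.1 h4
    nlinarith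
  have hb2 : ∀ z : E2, ‖z - x₀‖ ≤ r → ‖V z‖ ≤ 3 * m / 2 := by
    intro z hz
    have h1 := hVnear z hz
    have h2 : ‖V z‖ ≤ ‖V x₀‖ + ‖V z - V x₀‖ := by
      have := norm_add_le (V x₀) (V z - V x₀)
      simpa using this
    rw [← hm] at h2; linarith
  set δ : ℝ := r / 8 with hδ
  have hδpos : 0 < δ := by positivity
  have h8δ : 8 * δ ≤ r := by rw [hδ]; linarith
  set Δ : ℝ := 4 * δ / m with hΔ
  have hΔpos : 0 < Δ := by positivity
  -- choose two indices
  obtain ⟨N, hN⟩ := Metric.tendsto_atTop.1 hφtend δ hδpos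
  obtain ⟨M, hM⟩ := exists_nat_ge (|T (φ N)| + 2 * Δ + 1)
  set a := φ N with ha
  set b := φ (max N M) with hb
  have hya : ‖y a - x₀‖ ≤ δ := by
    have := hN N le_rfl
    rw [dist_eq_norm] at this
    exact this.le
  have hyb : ‖y b - x₀‖ ≤ δ := by
    have := hN (max N M) (le_max_left _ _)
    rw [dist_eq_norm] at this
    exact this.le
  have hTb : |T a| + 2 * Δ + 1 ≤ |T b| := by
    calc |T a| + 2 * Δ + 1 ≤ (M:ℝ) := hM
      _ ≤ (max N M : ℕ) := by exact_mod_cast Nat.cast_le.2 (le_max_right N M)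
      _ ≤ (φ (max N M) : ℝ) := by exact_mod_cast Nat.cast_le.2 (hφmono.le_apply)
      _ ≤ |T b| := hT _
  -- translated orbits and crossings
  set ζa : ℝ → E2 := fun t => ξ t - intVec (k a) with hζa
  set ζb : ℝ → E2 := fun t => ξ t - intVec (k b) with hζb
  have hζao : IsOrbit V ζa := orbit_sub_intVec hper hξ (k a)
  have hζbo : IsOrbit V ζb := orbit_sub_intVec hper hξ (k b)
  have hya' : ‖ζa (T a) - x₀‖ ≤ δ := hya
  have hyb' : ‖ζb (T b) - x₀‖ ≤ δ := hyb
  obtain ⟨s₁, hs₁mem, hs₁ball, hs₁perp⟩ := crossing hζao hmpos hδpos h8δ hb1 hb2 hya'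
  obtain ⟨s₂, hs₂mem, hs₂ball, hs₂perp⟩ := crossing hζbo hmpos hδpos h8δ hb1 hb2 hyb'
  rw [← hm, ← hΔ] at hs₁mem hs₂mem
  -- equal H-values
  have hHa : H (ζa s₁) = H (ξ 0) := by
    rw [hζa]
    simp only
    rw [per_sub hH.1 (ξ s₁) (k a)]
    exact H_const_orbit hH hξ s₁
  have hHb : H (ζb s₂) = H (ξ 0) := by
    rw [hζb]
    simp only
    rw [per_sub hH.1 (ξ s₂) (k b)]
    exact H_const_orbit hH hξ s₂
  -- identification of the crossing points
  have h7r : 7 * δ ≤ r := by linarith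
  have hpts : ζa s₁ = ζb s₂ :=
    transversal_inj hH hLG hmpos hLr (le_trans hs₁ball h7r) (le_trans hs₂ball h7r)
      hs₁perp hs₂perp (by rw [hHa, hHb])
  have hdiff : ξ s₂ - ξ s₁ = intVec (k b) - intVec (k a) := by
    have h1 : ξ s₁ - intVec (k a) = ξ s₂ - intVec (k b) := hpts
    have h2 : ξ s₁ - ξ s₂ = intVec (k a) - intVec (k b) :=
      sub_eq_sub_iff_sub_eq_sub.1 h1
    calc ξ s₂ - ξ s₁ = -(ξ s₁ - ξ s₂) := (neg_sub _ _).symm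
      _ = -(intVec (k a) - intVec (k b)) := by rw [h2]
      _ = intVec (k b) - intVec (k a) := neg_sub _ _
  -- the two crossing times are far apart
  have hs1T : |s₁ - T a| ≤ Δ := by
    rw [abs_le]; constructor <;> [linarith [hs₁mem.1]; linarith [hs₁mem.2]]
  have hs2T : |s₂ - T b| ≤ Δ := by
    rw [abs_le]; constructor <;> [linarith [hs₂mem.1]; linarith [hs₂mem.2]]
  have hsep : 1 ≤ |s₂ - s₁| := by
    have h1 : |T b| - |T a| ≤ |T b - T a| := abs_sub_abs_le_abs_sub _ _
    have h2 : T b - T a = (T b - s₂) + (s₂ - s₁) + (s₁ - T a) := by ring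
    have h3 : |T b - T a| ≤ |T b - s₂| + |s₂ - s₁| + |s₁ - T a| := by
      rw [h2]
      calc |(T b - s₂) + (s₂ - s₁) + (s₁ - T a)|
          ≤ |(T b - s₂) + (s₂ - s₁)| + |s₁ - T a| := abs_add_le _ _
        _ ≤ |T b - s₂| + |s₂ - s₁| + |s₁ - T a| := by
            have := abs_add_le (T b - s₂) (s₂ - s₁)
            linarith
    have h4 : |T b - s₂| ≤ Δ := by rw [abs_sub_comm]; exact hs2T
    linarith
  -- conclude via the shift lemma
  rcases le_or_gt s₁ s₂ with hord | hord
  · have hpos : 0 < s₂ - s₁ := by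
      rw [abs_of_nonneg (by linarith)] at hsep; linarith
    have : ξ (s₁ + (s₂ - s₁)) - ξ s₁ = intVec (k b - k a) := by
      rw [show s₁ + (s₂ - s₁) = s₂ by ring, intVec_sub]; exact hdiff
    exact shift_orbit hLip hper hξ hpos this
  · have hpos : 0 < s₁ - s₂ := by linarith
    have : ξ (s₂ + (s₁ - s₂)) - ξ s₂ = intVec (k a - k b) := by
      rw [show s₂ + (s₁ - s₂) = s₁ by ring, intVec_sub]
      calc ξ s₁ - ξ s₂ = -(ξ s₂ - ξ s₁) := (neg_sub _ _).symm
        _ = -(intVec (k b) - intVec (k a)) := by rw [hdiff]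
        _ = intVec (k a) - intVec (k b) := neg_sub _ _
    exact shift_orbit hLip hper hξ hpos this

end Statement2Aux

/-- Lemma 2.1. Every orbit of a flow with a stream function is a closed
orbit, a non-contractible periodic orbit, or is asymptotic to the stagnation set. -/
theorem statement2
    (V : E2 → E2) (K : NNReal) (hLip : LipschitzWith K V) (hper : ZPeriodic V)
    (H : E2 → ℝ) (hH : IsStreamFunction V H)
    (ξ : ℝ → E2) (hξ : IsOrbit V ξ) :
    IsClosedOrbit V ξ ∨ IsNoncontractibleOrbit V ξ ∨ AsympToStag V ξ := by
  by_cases hAs : AsympToStag V ξ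
  · exact Or.inr (Or.inr hAs)
  rcases not_and_or.1 hAs with hA | hB
  · -- failure of convergence at +∞
    rw [Metric.tendsto_atTop] at hA
    push_neg at hA
    obtain ⟨ε, hε, hfreq⟩ := hA
    choose tt htt hdist using fun n : ℕ => hfreq (n : ℝ)
    have hT : ∀ n : ℕ, (n:ℝ) ≤ |tt n| := by
      intro n
      calc (n:ℝ) ≤ tt n := htt n
        _ ≤ |tt n| := le_abs_self _
    have hd : ∀ n : ℕ, ε ≤ infDist (ξ (tt n)) (Stag V) := by
      intro n
      have := hdist n
      rwa [Real.dist_0_eq_abs, abs_of_nonneg infDist_nonneg] at this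
    rcases engine hLip hper hH hξ hε tt hT hd with h | h
    · exact Or.inl h
    · exact Or.inr (Or.inl h)
  · -- failure of convergence at −∞
    have hB' : ¬ Tendsto (fun t => infDist (ξ (-t)) (Stag V)) atTop (𝓝 0) := by
      intro hcon
      apply hB
      have := hcon.comp tendsto_neg_atBot_atTop
      have heq : ((fun t => infDist (ξ (-t)) (Stag V)) ∘ Neg.neg) =
          fun t => infDist (ξ t) (Stag V) := by
        funext t; simp [Function.comp]
      rwa [heq] at this
    rw [Metric.tendsto_atTop] at hB'
    push_neg at hB'
    obtain ⟨ε, hε, hfreq⟩ := hB'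
    choose tt htt hdist using fun n : ℕ => hfreq (n : ℝ)
    have hT : ∀ n : ℕ, (n:ℝ) ≤ |(- tt n)| := by
      intro n
      calc (n:ℝ) ≤ tt n := htt n
        _ ≤ |tt n| := le_abs_self _
        _ = |(- tt n)| := (abs_neg _).symm
    have hd : ∀ n : ℕ, ε ≤ infDist (ξ (- tt n)) (Stag V) := by
      intro n
      have := hdist n
      rwa [Real.dist_0_eq_abs, abs_of_nonneg infDist_nonneg] at this
    rcases engine hLip hper hH hξ hε (fun n => - tt n) hT hd with h | h
    · exact Or.inl h
    · exact Or.inr (Or.inl h)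


end
end

section
/- Suppose V admits a stream function H and the swirls of V have uniformly bounded size M for some M > 0. Then every cell S is bounded, closed and connected, satisfies S = closure(S°) where S° is the interior of S, and moreover S, S° and ∂S are all flow invariant. -/
open MeasureTheory Filter Topology Set Metric Bornology

noncomputable section

/-! ### Auxiliary lemmas -/

section Aux

variable {V : E2 → E2} {K : NNReal} {ξ η ζ : ℝ → E2}

theorem IsOrbit.continuous' (hξ : IsOrbit V ξ) : Continuous ξ :=
  continuous_iff_continuousAt.2 fun t => (hξ t).continuousAt

theorem IsOrbit.shift (hξ : IsOrbit V ξ) (a : ℝ) : IsOrbit V (fun s => ξ (a + s)) := by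
  intro s
  have h1 : HasDerivAt (fun s : ℝ => a + s) 1 s := by
    simpa using (hasDerivAt_id s).const_add a
  have h2 := (hξ (a + s)).scomp s h1
  rw [one_smul] at h2
  exact h2

theorem orbit_unique_s5 (hLip : LipschitzWith K V) (hξ : IsOrbit V ξ) (hη : IsOrbit V η)
    {a : ℝ} (hae : ξ a = η a) : ξ = η := by
  funext t
  have hmem : a ∈ Ioo (min a t - 1) (max a t + 1) :=
    ⟨by have := min_le_left a t; linarith, by have := le_max_left a t; linarith⟩
  have hmem' : t ∈ Ioo (min a t - 1) (max a t + 1) :=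
    ⟨by have := min_le_right a t; linarith, by have := le_max_right a t; linarith⟩
  exact ODE_solution_unique_of_mem_Ioo (s := fun _ => univ)
    (fun _ _ => hLip.lipschitzOnWith) hmem
    (fun s _ => ⟨hξ s, mem_univ _⟩) (fun s _ => ⟨hη s, mem_univ _⟩) hae hmem'

theorem IsOrbit.rev (hξ : IsOrbit V ξ) : IsOrbit (fun x => -V x) (fun s => ξ (-s)) := by
  intro s
  have h1 : HasDerivAt (fun s : ℝ => -s) (-1) s := hasDerivAt_neg' s
  have h2 := (hξ (-s)).scomp s h1
  rw [neg_one_smul] at h2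
  exact h2

theorem orbit_dist_nonneg (hLip : LipschitzWith K V) (hξ : IsOrbit V ξ) (hη : IsOrbit V η)
    {t : ℝ} (ht : 0 ≤ t) : dist (ξ t) (η t) ≤ dist (ξ 0) (η 0) * Real.exp (K * t) := by
  have := dist_le_of_trajectories_ODE (v := fun _ => V) (K := K) (fun _ => hLip)
    (hξ.continuous'.continuousOn) (fun s _ => (hξ s).hasDerivWithinAt)
    (hη.continuous'.continuousOn) (fun s _ => (hη s).hasDerivWithinAt)
    (le_refl (dist (ξ 0) (η 0))) t (⟨ht, le_refl t⟩ : t ∈ Icc 0 t)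
  simpa using this

theorem orbit_dist (hLip : LipschitzWith K V) (hξ : IsOrbit V ξ) (hη : IsOrbit V η)
    (a t : ℝ) : dist (ξ t) (η t) ≤ dist (ξ a) (η a) * Real.exp (K * |t - a|) := by
  have hLipn : LipschitzWith K (fun x => -V x) :=
    LipschitzWith.of_dist_le_mul (fun x y => by simpa [dist_neg_neg] using hLip.dist_le_mul x y)
  rcases le_total a t with h | h
  · have := orbit_dist_nonneg hLip (hξ.shift a) (hη.shift a) (t := t - a) (by linarith)
    simpa [abs_of_nonneg (by linarith : (0:ℝ) ≤ t - a)] using this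
  · have := orbit_dist_nonneg hLipn ((hξ.shift a).rev) ((hη.shift a).rev)
      (t := a - t) (by linarith)
    simp only [neg_zero, add_zero] at this
    have h2 : a + -(a - t) = t := by ring
    rw [h2] at this
    simpa [abs_of_nonpos (by linarith : t - a ≤ 0)] using this

theorem exists_orbitThrough (hLip : LipschitzWith K V) {C : ℝ} (hC : ∀ y, ‖V y‖ ≤ C)
    (x : E2) : ∃ ξ : ℝ → E2, IsOrbitThrough V ξ x := by
  have hC0 : 0 ≤ C := le_trans (norm_nonneg _) (hC x)
  have hex : ∀ n : ℕ, ∃ f : ℝ → E2, f 0 = x ∧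
      ∀ t ∈ Ioo (-(n+1) : ℝ) (n+1), HasDerivAt f (V (f t)) t := by
    intro n
    have hn0 : (0:ℝ) ≤ n := Nat.cast_nonneg n
    have h0mem : (0:ℝ) ∈ Icc (-((n:ℝ)+1)) ((n:ℝ)+1) := ⟨by linarith, by linarith⟩
    have hpl : IsPicardLindelof (fun _ : ℝ => V) (⟨0, h0mem⟩ : Icc (-((n:ℝ)+1)) ((n:ℝ)+1)) x
        (C.toNNReal * ((n:NNReal)+1)) 0 C.toNNReal K := by
      apply IsPicardLindelof.of_time_independent
      · intro y _; exact (hC y).trans (Real.le_coe_toNNReal C)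
      · exact hLip.lipschitzOnWith
      · have : max ((n:ℝ)+1-0) (0-(-((n:ℝ)+1))) = (n:ℝ)+1 := by
          rw [sub_zero, zero_sub, neg_neg, max_self]
        simp only [NNReal.coe_mul, NNReal.coe_add, NNReal.coe_natCast, NNReal.coe_one,
          NNReal.coe_zero]
        rw [this, sub_zero]
    obtain ⟨f, hf0, hf⟩ := hpl.exists_eq_forall_mem_Icc_hasDerivWithinAt₀
    exact ⟨f, hf0, fun t ht => (hf t (Ioo_subset_Icc_self ht)).hasDerivAt
      (Icc_mem_nhds ht.1 ht.2)⟩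
  choose f hf0 hfd using hex
  have agree : ∀ n m : ℕ, ∀ t : ℝ, t ∈ Ioo (-(n+1) : ℝ) (n+1) → t ∈ Ioo (-(m+1) : ℝ) (m+1) →
      f n t = f m t := by
    intro n m t htn htm
    rcases le_total (n : ℝ) (m : ℝ) with h | h
    · have hsub : Ioo (-(n+1) : ℝ) (n+1) ⊆ Ioo (-(m+1) : ℝ) (m+1) :=
        Ioo_subset_Ioo (by linarith) (by linarith)
      exact ODE_solution_unique_of_mem_Ioo (v := fun _ => V) (s := fun _ => univ)
        (fun _ _ => hLip.lipschitzOnWith) (by constructor <;> [linarith; linarith] :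
          (0:ℝ) ∈ Ioo (-(n+1) : ℝ) (n+1))
        (fun s hs => ⟨hfd n s hs, mem_univ _⟩)
        (fun s hs => ⟨hfd m s (hsub hs), mem_univ _⟩)
        (by rw [hf0, hf0]) htn
    · have hsub : Ioo (-(m+1) : ℝ) (m+1) ⊆ Ioo (-(n+1) : ℝ) (n+1) :=
        Ioo_subset_Ioo (by linarith) (by linarith)
      exact (ODE_solution_unique_of_mem_Ioo (v := fun _ => V) (s := fun _ => univ)
        (fun _ _ => hLip.lipschitzOnWith) (by constructor <;> [linarith; linarith] :
          (0:ℝ) ∈ Ioo (-(m+1) : ℝ) (m+1))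
        (fun s hs => ⟨hfd m s hs, mem_univ _⟩)
        (fun s hs => ⟨hfd n s (hsub hs), mem_univ _⟩)
        (by rw [hf0, hf0]) htm).symm
  refine ⟨fun t => f ⌈|t|⌉₊ t, ?_, by simpa using hf0 0⟩
  intro t
  set n : ℕ := ⌈|t|⌉₊ + 1 with hn
  have hbig : ∀ s : ℝ, |s - t| < 1 → (fun u => f ⌈|u|⌉₊ u) s = f n s := by
    intro s hs
    have h1 : |s| ≤ (⌈|s|⌉₊ : ℝ) := Nat.le_ceil _
    have h2 : |s| < |t| + 1 := by
      calc |s| ≤ |s - t| + |t| := by simpa using abs_add_le (s - t) t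
      _ < |t| + 1 := by linarith
    have h3 : |t| ≤ (⌈|t|⌉₊ : ℝ) := Nat.le_ceil _
    have h4 : (n : ℝ) = (⌈|t|⌉₊ : ℝ) + 1 := by exact_mod_cast rfl
    have h5 := le_abs_self s
    refine agree _ _ s ⟨?_, ?_⟩ ⟨?_, ?_⟩
    · have := neg_abs_le s; linarith
    · linarith
    · have := neg_abs_le s; linarith
    · linarith
  have hmemt : t ∈ Ioo (-(n+1) : ℝ) (n+1) := by
    have h3 : |t| ≤ (⌈|t|⌉₊ : ℝ) := Nat.le_ceil _
    have h4 : (n : ℝ) = (⌈|t|⌉₊ : ℝ) + 1 := by exact_mod_cast rfl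
    constructor
    · have := neg_abs_le t; linarith
    · have := le_abs_self t; linarith
  have heq : (fun u => f ⌈|u|⌉₊ u) =ᶠ[nhds t] f n := by
    filter_upwards [Metric.ball_mem_nhds t one_pos] with s hs
    exact hbig s (by simpa [Real.dist_eq] using hs)
  have h6 := (hfd n t hmemt).congr_of_eventuallyEq heq
  have h5 : f ⌈|t|⌉₊ t = f n t := hbig t (by simp)
  simp only []
  rw [h5]
  exact h6

theorem periodic_bounded (hLip : LipschitzWith K V) (hper : ZPeriodic V) :
    ∃ C : ℝ, ∀ x : E2, ‖V x‖ ≤ C := by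
  obtain ⟨C, hC⟩ := (isCompact_closedBall (0 : E2) 2).exists_bound_of_continuousOn
    hLip.continuous.continuousOn
  refine ⟨C, fun x => ?_⟩
  set k : Fin 2 → ℤ := fun i => ⌊x i⌋ with hk
  set y : E2 := x - intVec k with hy
  have hxy : x = y + intVec k := by simp [hy]
  have hVy : V x = V y := by rw [hxy, hper]
  rw [hVy]
  apply hC
  have hcoord : ∀ i, |y i| ≤ 1 := by
    intro i
    have h1 : y i = x i - ⌊x i⌋ := by simp [hy, intVec, hk]
    have h2 := Int.floor_le (x i)
    have h3 := Int.lt_floor_add_one (x i)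
    rw [h1]; rw [abs_le]; constructor <;> linarith
  have : ‖y‖ ≤ 2 := by
    rw [EuclideanSpace.norm_eq]
    have : ∑ i, ‖y i‖^2 ≤ 2 := by
      rw [Fin.sum_univ_two]
      have h0 := hcoord 0; have h1 := hcoord 1
      have : ‖y 0‖ ≤ 1 := by rwa [Real.norm_eq_abs]
      have : ‖y 1‖ ≤ 1 := by rwa [Real.norm_eq_abs]
      nlinarith [norm_nonneg (y 0), norm_nonneg (y 1)]
    calc Real.sqrt (∑ i, ‖y i‖^2) ≤ Real.sqrt 4 := by
          apply Real.sqrt_le_sqrt; linarith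
      _ = 2 := by rw [show (4:ℝ) = 2^2 by norm_num, Real.sqrt_sq]; norm_num
  simpa [mem_closedBall, dist_eq_norm] using this

/-! topology of `encl` -/

/-- the union of the bounded complementary components. -/
def enclB (J : Set E2) : Set E2 := {x | x ∉ J ∧ IsBounded (connectedComponentIn Jᶜ x)}

theorem encl_eq (J : Set E2) : encl J = J ∪ enclB J := rfl

theorem not_isBounded_univ_E2 : ¬ IsBounded (univ : Set E2) := by
  intro h
  obtain ⟨r, hr⟩ := h.subset_closedBall 0
  have := hr (mem_univ (EuclideanSpace.single 0 (|r|+1) : E2))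
  rw [mem_closedBall, dist_zero_right, EuclideanSpace.norm_single, Real.norm_eq_abs,
    abs_of_nonneg (by positivity)] at this
  have := le_abs_self r; linarith

theorem isOpen_enclB {J : Set E2} (hJ : IsClosed J) : IsOpen (enclB J) := by
  rw [isOpen_iff_mem_nhds]
  rintro x ⟨hxJ, hxb⟩
  have hopen : IsOpen (connectedComponentIn Jᶜ x) := hJ.isOpen_compl.connectedComponentIn
  have hmem : x ∈ connectedComponentIn Jᶜ x := mem_connectedComponentIn hxJ
  refine Filter.mem_of_superset (hopen.mem_nhds hmem) ?_
  intro y hy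
  have h1 : y ∉ J := connectedComponentIn_subset Jᶜ x hy
  have h2 : connectedComponentIn Jᶜ x = connectedComponentIn Jᶜ y := connectedComponentIn_eq hy
  exact ⟨h1, h2 ▸ hxb⟩

theorem closure_comp_diff_subset {J : Set E2} (hJ : IsClosed J) {x : E2} :
    closure (connectedComponentIn Jᶜ x) \ connectedComponentIn Jᶜ x ⊆ J := by
  rintro z ⟨hz1, hz2⟩
  by_contra hzJ
  have hopen : IsOpen (connectedComponentIn Jᶜ z) := hJ.isOpen_compl.connectedComponentIn
  have hmem : z ∈ connectedComponentIn Jᶜ z := mem_connectedComponentIn hzJ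
  obtain ⟨y, hy1, hy2⟩ := mem_closure_iff_nhds.1 hz1 _ (hopen.mem_nhds hmem)
  have h2 : connectedComponentIn Jᶜ z = connectedComponentIn Jᶜ y := connectedComponentIn_eq hy1
  have h3 : connectedComponentIn Jᶜ x = connectedComponentIn Jᶜ y := connectedComponentIn_eq hy2
  exact hz2 (h3 ▸ h2 ▸ hmem)

theorem closure_enclB_subset {J : Set E2} (hJ : IsClosed J) :
    closure (enclB J) ⊆ J ∪ enclB J := by
  intro z hz
  by_contra hcon
  rw [mem_union] at hcon
  push_neg at hcon
  obtain ⟨hzJ', hzB⟩ := hcon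
  have hopen : IsOpen (connectedComponentIn Jᶜ z) := hJ.isOpen_compl.connectedComponentIn
  have hmem : z ∈ connectedComponentIn Jᶜ z := mem_connectedComponentIn hzJ'
  obtain ⟨y, hy1, hy2⟩ := mem_closure_iff_nhds.1 hz _ (hopen.mem_nhds hmem)
  have h2 : connectedComponentIn Jᶜ z = connectedComponentIn Jᶜ y := connectedComponentIn_eq hy1
  exact hzB ⟨hzJ', h2 ▸ hy2.2⟩

theorem isClosed_encl {J : Set E2} (hJ : IsClosed J) : IsClosed (encl J) := by
  rw [encl_eq, ← closure_eq_iff_isClosed]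
  apply Subset.antisymm _ subset_closure
  calc closure (J ∪ enclB J) = closure J ∪ closure (enclB J) := closure_union ..
    _ ⊆ J ∪ (J ∪ enclB J) := union_subset_union hJ.closure_subset (closure_enclB_subset hJ)
    _ = J ∪ enclB J := by rw [← union_assoc, union_self]

theorem frontier_encl_subset {J : Set E2} (hJ : IsClosed J) : frontier (encl J) ⊆ J := by
  intro z hz
  have h1 : z ∈ encl J := (isClosed_encl hJ).frontier_subset hz
  have h2 : z ∉ interior (encl J) := fun h => hz.2 h
  rcases h1 with h | h
  · exact h
  · exact absurd (interior_maximal (subset_union_right) (isOpen_enclB hJ) h) h2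

theorem subset_interior_encl {J : Set E2} (hJ : IsClosed J) : enclB J ⊆ interior (encl J) :=
  interior_maximal subset_union_right (isOpen_enclB hJ)

theorem one_lt_rank_E2 : 1 < Module.rank ℝ E2 := by
  have h : (Module.finrank ℝ E2 : Cardinal) = Module.rank ℝ E2 := Module.finrank_eq_rank ℝ E2
  rw [← h]
  norm_num [finrank_euclideanSpace]

theorem isPreconnected_compl_closedBall (c : E2) (r : ℝ) :
    IsPreconnected ((closedBall c r)ᶜ : Set E2) := by
  rcases lt_or_ge r 0 with hr | hr
  · rw [closedBall_eq_empty.2 hr, compl_empty]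
    exact isPreconnected_univ
  apply isPreconnected_of_forall_pair
  intro x hx y hy
  rw [mem_compl_iff, mem_closedBall, not_le] at hx hy
  set t := dist x c with ht
  set s := dist y c with hs
  have hs0 : 0 < s := lt_of_le_of_lt hr hy
  set y' : E2 := c + (t/s) • (y - c) with hy'
  have hy'mem : y' ∈ sphere c t := by
    rw [mem_sphere, hy', dist_eq_norm]
    have : c + (t/s) • (y - c) - c = (t/s) • (y - c) := by abel
    rw [this, norm_smul, Real.norm_eq_abs, abs_of_nonneg (by positivity)]
    rw [show ‖y - c‖ = s by rw [hs, dist_eq_norm]]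
    field_simp
  have hxmem : x ∈ sphere c t := by rw [mem_sphere]
  refine ⟨sphere c t ∪ segment ℝ y' y, ?_, Or.inl hxmem, Or.inr (right_mem_segment ℝ y' y), ?_⟩
  · rintro z (hz | hz)
    · rw [mem_compl_iff, mem_closedBall, not_le]
      rw [mem_sphere] at hz
      rw [hz]; exact hx
    · rw [mem_compl_iff, mem_closedBall, not_le]
      obtain ⟨u, v, hu, hv, huv, rfl⟩ := hz
      have : u • y' + v • y - c = (u * (t/s) + v) • (y - c) := by
        rw [hy']
        have hc : u • (c + (t/s) • (y - c)) + v • y - c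
            = (u * (t/s)) • (y - c) + v • (y - c) + (u + v - 1) • c := by
          module
        rw [hc, huv]
        simp [add_smul]
      rw [dist_eq_norm, this, norm_smul, Real.norm_eq_abs,
        abs_of_nonneg (by positivity), show ‖y - c‖ = s by rw [hs, dist_eq_norm]]
      have heq2 : (u * (t/s) + v) * s = u * t + v * s := by field_simp
      rw [heq2]
      rcases eq_or_lt_of_le hu with h | h
      · have hv1 : v = 1 := by linarith
        rw [← h, hv1]; simpa using hy
      · nlinarith [mul_nonneg hv (by linarith : (0:ℝ) ≤ s - r)]
  · apply IsPreconnected.union y' hy'mem (left_mem_segment ℝ y' y)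
    · exact isPreconnected_sphere one_lt_rank_E2 c t
    · exact (convex_segment y' y).isPreconnected

theorem not_isBounded_compl_closedBall (c : E2) (r : ℝ) :
    ¬ IsBounded ((closedBall c r)ᶜ : Set E2) := by
  intro h
  exact not_isBounded_univ_E2 (by
    rw [← union_compl_self (closedBall c r)]
    exact (isBounded_closedBall).union h)

theorem encl_subset_closedBall {J : Set E2} {c : E2} {r : ℝ} (hJc : J ⊆ closedBall c r) :
    encl J ⊆ closedBall c r := by
  rintro x (hx | ⟨hxJ, hxb⟩)
  · exact hJc hx
  · by_contra hxc
    have hsub : ((closedBall c r)ᶜ : Set E2) ⊆ Jᶜ := compl_subset_compl.2 hJc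
    have h1 : (closedBall c r)ᶜ ⊆ connectedComponentIn Jᶜ x :=
      (isPreconnected_compl_closedBall c r).subset_connectedComponentIn hxc hsub
    exact not_isBounded_compl_closedBall c r (hxb.subset h1)

theorem isPreconnected_encl {J : Set E2} (hJ : IsClosed J) (hJconn : IsPreconnected J)
    {p : E2} (hp : p ∈ J) : IsPreconnected (encl J) := by
  apply isPreconnected_of_forall p
  rintro y (hy | ⟨hyJ, hyb⟩)
  · exact ⟨J, subset_union_left, hp, hy, hJconn⟩
  · set C := connectedComponentIn Jᶜ y with hC
    have hyC : y ∈ C := mem_connectedComponentIn hyJ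
    have hCne : C.Nonempty := ⟨y, hyC⟩
    have hCsub : ∀ w ∈ C, w ∈ enclB J := by
      intro w hw
      have h1 : w ∉ J := connectedComponentIn_subset Jᶜ y hw
      have h2 : connectedComponentIn Jᶜ y = connectedComponentIn Jᶜ w := connectedComponentIn_eq hw
      exact ⟨h1, h2 ▸ hyb⟩
    have hCopen : IsOpen C := hJ.isOpen_compl.connectedComponentIn
    have hfr : (closure C \ C).Nonempty := by
      by_contra hfe
      rw [not_nonempty_iff_eq_empty, diff_eq_empty] at hfe
      have hclopen : IsClopen C :=
        ⟨closure_eq_iff_isClosed.1 (Subset.antisymm hfe subset_closure), hCopen⟩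
      rcases isClopen_iff.1 hclopen with h | h
      · exact hCne.ne_empty h
      · exact not_isBounded_univ_E2 (h ▸ hyb)
    obtain ⟨z, hz⟩ := hfr
    have hzJ : z ∈ J := closure_comp_diff_subset hJ hz
    refine ⟨J ∪ closure C, ?_, Or.inl hp, Or.inr (subset_closure hyC), ?_⟩
    · rintro w (hw | hw)
      · exact Or.inl hw
      · by_cases hwC : w ∈ C
        · exact Or.inr (hCsub w hwC)
        · exact Or.inl (closure_comp_diff_subset hJ ⟨hw, hwC⟩)
    · exact IsPreconnected.union z hzJ hz.1 hJconn
        isPreconnected_connectedComponentIn.closure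

/-! closed orbits and invariance -/

theorem IsClosedOrbit.periodic (hLip : LipschitzWith K V) (hζ : IsClosedOrbit V ζ) :
    ∃ T > (0:ℝ), Function.Periodic ζ T := by
  obtain ⟨horb, T, hT, hTeq⟩ := hζ
  refine ⟨T, hT, fun t => ?_⟩
  have h1 : (fun s => ζ (T + s)) = ζ :=
    orbit_unique_s5 hLip (horb.shift T) horb (a := 0) (by simpa using hTeq)
  have := congrFun h1 t
  simpa [add_comm] using this

theorem IsClosedOrbit.range_eq (hLip : LipschitzWith K V) (hζ : IsClosedOrbit V ζ) :
    ∃ T > (0:ℝ), range ζ = ζ '' Icc 0 T := by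
  obtain ⟨T, hT, hper⟩ := hζ.periodic hLip
  refine ⟨T, hT, Subset.antisymm ?_ (image_subset_range _ _)⟩
  rintro _ ⟨t, rfl⟩
  obtain ⟨s, hs, hst⟩ := hper.exists_mem_Ico₀ hT t
  exact ⟨s, Ico_subset_Icc_self hs, hst.symm⟩

theorem IsClosedOrbit.isCompact_range (hLip : LipschitzWith K V) (hζ : IsClosedOrbit V ζ) :
    IsCompact (range ζ) := by
  obtain ⟨T, hT, heq⟩ := hζ.range_eq hLip
  rw [heq]
  exact isCompact_Icc.image hζ.1.continuous'

theorem orbit_range_subset (hLip : LipschitzWith K V) (hζ : IsOrbit V ζ)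
    (hξ : IsOrbit V ξ) {t₀ s₀ : ℝ} (h : ξ t₀ = ζ s₀) : range ξ ⊆ range ζ := by
  have h1 : (fun s => ξ (t₀ + s)) = (fun s => ζ (s₀ + s)) :=
    orbit_unique_s5 hLip (hξ.shift t₀) (hζ.shift s₀) (a := 0) (by simpa using h)
  rintro _ ⟨t, rfl⟩
  have := congrFun h1 (t - t₀)
  simp only [add_sub_cancel] at this
  exact this ▸ mem_range_self _

theorem flowInvariant_encl (hLip : LipschitzWith K V) (hζ : IsClosedOrbit V ζ) :
    FlowInvariant V (encl (range ζ)) := by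
  set J := range ζ with hJdef
  have hJcl : IsClosed J := (hζ.isCompact_range hLip).isClosed
  rintro x hx ξ ⟨hξorb, hξ0⟩
  by_contra hcon
  rw [not_subset] at hcon
  obtain ⟨_, ⟨t₁, rfl⟩, ht₁⟩ := hcon
  set A : Set ℝ := ξ ⁻¹' (encl J) with hA
  have hAcl : IsClosed A := (isClosed_encl hJcl).preimage hξorb.continuous'
  have h0A : (0:ℝ) ∈ A := by rw [hA, mem_preimage, hξ0]; exact hx
  have ht₁A : t₁ ∉ A := ht₁
  have hAne : A ≠ univ := fun h => ht₁A (h ▸ mem_univ t₁)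
  have hAnotopen : ¬ IsOpen A := by
    intro hop
    rcases isClopen_iff.1 ⟨hAcl, hop⟩ with h | h
    · exact absurd h0A (by simp [h])
    · exact hAne h
  rw [isOpen_iff_mem_nhds] at hAnotopen
  push_neg at hAnotopen
  obtain ⟨t₀, ht₀A, ht₀⟩ := hAnotopen
  have ht₀cl : t₀ ∈ closure Aᶜ := by
    rw [mem_closure_iff_nhds]
    intro N hN
    by_contra hcon2
    rw [not_nonempty_iff_eq_empty] at hcon2
    exact ht₀ (Filter.mem_of_superset hN (fun s hs => by
      by_contra hsA
      exact (eq_empty_iff_forall_notMem.1 hcon2 s) ⟨hs, hsA⟩))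
  have hfront : ξ t₀ ∈ frontier (encl J) := by
    rw [frontier_eq_closure_inter_closure]
    constructor
    · exact subset_closure ht₀A
    · have h1 : ξ t₀ ∈ closure (ξ '' Aᶜ) :=
        (image_closure_subset_closure_image hξorb.continuous') (mem_image_of_mem ξ ht₀cl)
      refine closure_mono ?_ h1
      rintro _ ⟨s, hs, rfl⟩
      exact hs
  have hJmem : ξ t₀ ∈ J := frontier_encl_subset hJcl hfront
  obtain ⟨s₀, hs₀⟩ := hJmem
  have := orbit_range_subset hLip hζ.1 hξorb hs₀.symm
  exact ht₁ (Or.inl (this (mem_range_self t₁)))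

theorem flowInvariant_closure (hLip : LipschitzWith K V) {C : ℝ} (hC : ∀ y, ‖V y‖ ≤ C)
    {E : Set E2} (hE : FlowInvariant V E) : FlowInvariant V (closure E) := by
  rintro x hx ξ ⟨hξorb, hξ0⟩
  rintro _ ⟨t, rfl⟩
  rw [Metric.mem_closure_iff]
  intro ε hε
  set c := Real.exp (K * |t|) with hc
  have hc0 : 0 < c := Real.exp_pos _
  obtain ⟨y, hyE, hxy⟩ := Metric.mem_closure_iff.1 hx (ε / c) (by positivity)
  obtain ⟨η, hηorb, hη0⟩ := exists_orbitThrough hLip hC y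
  refine ⟨η t, hE y hyE η ⟨hηorb, hη0⟩ (mem_range_self t), ?_⟩
  calc dist (ξ t) (η t) ≤ dist (ξ 0) (η 0) * Real.exp (K * |t - 0|) :=
        orbit_dist hLip hξorb hηorb 0 t
    _ = dist x y * c := by rw [hξ0, hη0, sub_zero, hc]
    _ < (ε / c) * c := mul_lt_mul_of_pos_right hxy hc0
    _ = ε := by field_simp

end Aux

/-- Lemma 2.4 (1). Every cell is bounded, closed, connected, equals the
closure of its interior, and the cell, its interior and its boundary are flow invariant. -/
theorem statement5
    (V : E2 → E2) (K : NNReal) (hLip : LipschitzWith K V) (hper : ZPeriodic V)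
    (H : E2 → ℝ) (hH : IsStreamFunction V H)
    (M : ℝ) (hM : 0 < M) (hswirl : SwirlBound V M)
    (S : Set E2) (hS : IsCell V S) :
    IsBounded S ∧ IsClosed S ∧ IsConnected S ∧ S = closure (interior S) ∧
    FlowInvariant V S ∧ FlowInvariant V (interior S) ∧ FlowInvariant V (frontier S) := by
  obtain ⟨hclosed, ζ, hζ, hmono, hSeq, -⟩ := hS
  obtain ⟨C, hC⟩ := periodic_bounded hLip hper
  set U : Set E2 := ⋃ m, encl (range (ζ m)) with hU
  have hJcl : ∀ m, IsClosed (range (ζ m)) := fun m => ((hζ m).isCompact_range hLip).isClosed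
  have hJb : ∀ m, IsBounded (range (ζ m)) := fun m => ((hζ m).isCompact_range hLip).isBounded
  have hmono' : ∀ m n, m ≤ n → encl (range (ζ m)) ⊆ encl (range (ζ n)) := by
    intro m n h
    induction n, h using Nat.le_induction with
    | base => exact subset_rfl
    | succ n hmn ih => exact ih.trans (hmono n).subset
  have hpm : ∀ m, ζ m 0 ∈ range (ζ m) := fun m => mem_range_self 0
  set p : E2 := ζ 0 0 with hp
  have hpEm : ∀ m, p ∈ encl (range (ζ m)) := fun m =>
    hmono' 0 m (Nat.zero_le m) (Or.inl (hpm 0))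
  have hJball : ∀ m, range (ζ m) ⊆ closedBall (ζ m 0) M := by
    intro m y hy
    rw [mem_closedBall]
    exact le_trans (Metric.dist_le_diam_of_mem (hJb m) hy (hpm m)) (hswirl (ζ m) (hζ m))
  have hEball : ∀ m, encl (range (ζ m)) ⊆ closedBall (ζ m 0) M := fun m =>
    encl_subset_closedBall (hJball m)
  have hUball : U ⊆ closedBall p (2*M) := by
    rintro x hx
    obtain ⟨m, hm⟩ := mem_iUnion.1 hx
    rw [mem_closedBall]
    have h1 : dist x (ζ m 0) ≤ M := hEball m hm
    have h2 : dist p (ζ m 0) ≤ M := hEball m (hpEm m)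
    calc dist x p ≤ dist x (ζ m 0) + dist p (ζ m 0) := dist_triangle_right ..
      _ ≤ 2*M := by linarith
  have hSU : S = closure U := hSeq
  have hbounded : IsBounded S := by
    rw [hSU]
    exact ((isBounded_closedBall).subset hUball).closure
  have hconn : IsConnected S := by
    have h1 : IsPreconnected U := by
      apply isPreconnected_iUnion
      · exact ⟨p, mem_iInter.2 hpEm⟩
      · intro m
        exact isPreconnected_encl (hJcl m)
          (isPreconnected_range (hζ m).1.continuous') (hpm m)
    rw [hSU]
    exact ⟨⟨p, subset_closure (mem_iUnion.2 ⟨0, hpEm 0⟩)⟩, h1.closure⟩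
  have hUS : U ⊆ S := hSU ▸ subset_closure
  have hdisj : ∀ m, ∀ x, x ∈ range (ζ m) → x ∉ range (ζ (m+1)) := by
    intro m x hx hx'
    obtain ⟨a, ha⟩ := hx
    obtain ⟨b, hb⟩ := hx'
    have e1 : range (ζ m) ⊆ range (ζ (m+1)) :=
      orbit_range_subset hLip (hζ (m+1)).1 (hζ m).1 (ha.trans hb.symm)
    have e2 : range (ζ (m+1)) ⊆ range (ζ m) :=
      orbit_range_subset hLip (hζ m).1 (hζ (m+1)).1 (hb.trans ha.symm)
    exact (hmono m).ne (congrArg encl (e1.antisymm e2))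
  have hUint : U ⊆ interior S := by
    rintro x hx
    obtain ⟨m, hm⟩ := mem_iUnion.1 hx
    have hsubS : ∀ n, encl (range (ζ n)) ⊆ S := fun n y hy => hUS (mem_iUnion.2 ⟨n, hy⟩)
    rcases hm with hxJ | hxB
    · have h1 : x ∈ encl (range (ζ (m+1))) := hmono' m (m+1) (Nat.le_succ m) (Or.inl hxJ)
      rcases h1 with h | h
      · exact absurd h (hdisj m x hxJ)
      · exact interior_mono (hsubS (m+1)) (subset_interior_encl (hJcl (m+1)) h)
    · exact interior_mono (hsubS m) (subset_interior_encl (hJcl m) hxB)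
  have hclint : S = closure (interior S) := by
    apply Subset.antisymm
    · calc S = closure U := hSU
        _ ⊆ closure (interior S) := closure_mono hUint
    · calc closure (interior S) ⊆ closure S := closure_mono interior_subset
        _ = S := hclosed.closure_eq
  have hUinv : FlowInvariant V U := by
    rintro x hx ξ hξ
    obtain ⟨m, hm⟩ := mem_iUnion.1 hx
    exact (flowInvariant_encl hLip (hζ m) x hm ξ hξ).trans
      (subset_iUnion (fun n => encl (range (ζ n))) m)
  have hSinv : FlowInvariant V S := hSU ▸ flowInvariant_closure hLip hC hUinv
  have hIntInv : FlowInvariant V (interior S) := by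
    rintro x hx ξ ⟨hξorb, hξ0⟩
    rintro _ ⟨t, rfl⟩
    obtain ⟨ε, hε, hball⟩ := Metric.mem_nhds_iff.1 (mem_interior_iff_mem_nhds.1 hx)
    set c := Real.exp (K * |0 - t|) with hc
    have hc0 : 0 < c := Real.exp_pos _
    rw [mem_interior_iff_mem_nhds, Metric.mem_nhds_iff]
    refine ⟨ε / c, by positivity, ?_⟩
    intro z hz
    obtain ⟨η, hηorb, hη0⟩ := exists_orbitThrough hLip hC z
    set η' : ℝ → E2 := fun s => η (-t + s) with hη'
    have hη'orb : IsOrbit V η' := hηorb.shift (-t)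
    have hη't : η' t = z := by simp [hη', hη0]
    have hmem : η' 0 ∈ ball x ε := by
      rw [mem_ball]
      calc dist (η' 0) x = dist (η' 0) (ξ 0) := by rw [hξ0]
        _ ≤ dist (η' t) (ξ t) * Real.exp (K * |0 - t|) := orbit_dist hLip hη'orb hξorb t 0
        _ = dist z (ξ t) * c := by rw [hη't, hc]
        _ < (ε / c) * c := mul_lt_mul_of_pos_right (by simpa [mem_ball] using hz) hc0
        _ = ε := by field_simp
    have hr := hSinv (η' 0) (hball hmem) η' ⟨hη'orb, rfl⟩
    exact hη't ▸ hr (mem_range_self t)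
  have hFrInv : FlowInvariant V (frontier S) := by
    rintro x hx ξ ⟨hξorb, hξ0⟩
    rintro _ ⟨t, rfl⟩
    have hxS : x ∈ S := hclosed.frontier_subset hx
    have hxnint : x ∉ interior S := by
      rw [hclosed.frontier_eq] at hx; exact hx.2
    have htS : ξ t ∈ S := hSinv x hxS ξ ⟨hξorb, hξ0⟩ (mem_range_self t)
    have htnint : ξ t ∉ interior S := by
      intro h
      have hη : IsOrbit V (fun s => ξ (t + s)) := hξorb.shift t
      have := hIntInv (ξ t) h _ ⟨hη, by simp⟩
        (⟨-t, by simp [hξ0]⟩ : x ∈ range (fun s => ξ (t + s)))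
      exact hxnint this
    rw [hclosed.frontier_eq]
    exact ⟨htS, htnint⟩
  exact ⟨hbounded, hclosed, hconn, hclint, hSinv, hIntInv, hFrInv⟩


end
end

section
/- Suppose V admits a stream function H. Let θ > 0, and let x, y ∈ ℝ² satisfy H(x) = H(y) and y ∉ ξ(ℝ;x), where ξ(·;x) is the orbit of V with ξ(0;x) = x. Suppose γ : [0,T] → ℝ² is a continuous curve with γ(0) = x, γ(T) = y, and max_{t∈[0,T]} |H(γ(t)) − H(x)| ≤ θ. Then there exists t₀ ∈ [0,T] such that |V(γ(t₀))| ≤ 3(K₀ + 1)·θ^{1/3}. -/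
open MeasureTheory Filter Topology Set Metric Bornology

noncomputable section

lemma E2_norm_sq (v : E2) : ‖v‖^2 = v 0^2 + v 1^2 := by
  rw [EuclideanSpace.norm_eq, Real.sq_sqrt (by positivity)]
  simp [Fin.sum_univ_two, sq_abs]
lemma abs_le_of_sq (X C : ℝ) (hC : 0 ≤ C) (h : X^2 ≤ C^2) : |X| ≤ C := by
  nlinarith [abs_nonneg X, sq_abs X]
lemma dot_abs_le (v w : E2) : |v 0 * w 0 + v 1 * w 1| ≤ ‖v‖ * ‖w‖ := by
  apply abs_le_of_sq _ _ (by positivity)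
  have h1 := E2_norm_sq v; have h2 := E2_norm_sq w
  nlinarith [sq_nonneg (v 0 * w 1 - v 1 * w 0)]
lemma cross_abs_le (v w : E2) : |v 0 * w 1 - v 1 * w 0| ≤ ‖v‖ * ‖w‖ := by
  apply abs_le_of_sq _ _ (by positivity)
  have h1 := E2_norm_sq v; have h2 := E2_norm_sq w
  nlinarith [sq_nonneg (v 0 * w 0 + v 1 * w 1)]
lemma cross_abs_eq (v w : E2) (h : v 0 * w 0 + v 1 * w 1 = 0) :
    |v 0 * w 1 - v 1 * w 0| = ‖v‖ * ‖w‖ := by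
  have h1 := E2_norm_sq v; have h2 := E2_norm_sq w
  have hsq : (v 0 * w 1 - v 1 * w 0)^2 = (‖v‖ * ‖w‖)^2 := by nlinarith
  have hC : 0 ≤ ‖v‖ * ‖w‖ := by positivity
  nlinarith [abs_nonneg (v 0 * w 1 - v 1 * w 0), sq_abs (v 0 * w 1 - v 1 * w 0)]

set_option maxHeartbeats 1000000 in
lemma trap (V : E2 → E2) (K : ℝ) (hK : 0 < K)
    (hLip : ∀ a b : E2, ‖V a - V b‖ ≤ K * ‖a - b‖)
    (H : E2 → ℝ) (hHdiff : Differentiable ℝ H)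
    (hDH : ∀ (z v : E2), fderiv ℝ H z v = v 0 * V z 1 - v 1 * V z 0)
    (ξ : ℝ → E2) (hξ : ∀ s, HasDerivAt ξ (V (ξ s)) s)
    (hHξ : ∀ s, H (ξ s) = H (ξ 0))
    (hspeed : ∀ s s', ‖ξ s - ξ s'‖ ≤ K * |s - s'|)
    (c ρ θ' : ℝ) (hc : 0 < c) (hρ : 0 < ρ)
    (z : E2) (s₀ : ℝ) (hzq : ‖z - ξ s₀‖ ≤ ρ)
    (hVq : 9*c/10 ≤ ‖V (ξ s₀)‖)
    (hθ' : |H z - H (ξ 0)| ≤ θ')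
    (hR1 : 4 * K^2 * ρ ≤ (9*c/10)^2)
    (hR2 : K * ρ + 4*K^2*ρ/(9*c/10) ≤ 9*c/10 - c/4) :
    ∃ s : ℝ, ‖z - ξ s‖ ≤ 4 * θ' / c := by
  set q : E2 := ξ s₀ with hq
  set Vq : E2 := V q with hVqdef
  set m : ℝ := 9*c/10 with hm
  clear_value m
  have hm0 : 0 < m := by rw [hm]; positivity
  set a : ℝ := 2*ρ/m with ha
  clear_value a
  have ha0 : 0 < a := by rw [ha]; positivity
  have hVq0 : 0 < ‖Vq‖ := lt_of_lt_of_le hm0 hVq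
  -- derivatives of shifted orbit
  have hζ : ∀ s : ℝ, HasDerivAt (fun s => ξ (s₀ + s)) (V (ξ (s₀ + s))) s :=
    fun s => HasDerivAt.comp_const_add s₀ s (hξ (s₀ + s))
  have hζi : ∀ (i : Fin 2) (s : ℝ), HasDerivAt (fun s => ξ (s₀ + s) i) (V (ξ (s₀ + s)) i) s := by
    intro i s
    have := (EuclideanSpace.proj i).hasFDerivAt.comp_hasDerivAt s (hζ s)
    exact this
  have hδ : ∀ s : ℝ, ‖ξ (s₀ + s) - q‖ ≤ K * |s| := by
    intro s
    have h := hspeed (s₀ + s) s₀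
    simp only [add_sub_cancel_left] at h
    exact h
  -- the transversal coordinate function
  set f : ℝ → ℝ := fun s => (ξ (s₀ + s) 0 - z 0) * Vq 0 + (ξ (s₀ + s) 1 - z 1) * Vq 1 with hf
  set F' : ℝ → ℝ := fun s => V (ξ (s₀ + s)) 0 * Vq 0 + V (ξ (s₀ + s)) 1 * Vq 1 with hF'
  have hf' : ∀ s, HasDerivAt f (F' s) s := by
    intro s
    exact (((hζi 0 s).sub_const (z 0)).mul_const (Vq 0)).add
      (((hζi 1 s).sub_const (z 1)).mul_const (Vq 1))
  have hfc : Continuous f := by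
    rw [continuous_iff_continuousAt]; exact fun s => (hf' s).continuousAt
  -- lower bound on F' on [-a,a]
  have hF'lb : ∀ s : ℝ, |s| ≤ a → ‖Vq‖ * (‖Vq‖ - K^2*a) ≤ F' s := by
    intro s hs
    have hVd : ‖V (ξ (s₀ + s)) - Vq‖ ≤ K^2 * a := by
      calc ‖V (ξ (s₀ + s)) - Vq‖ ≤ K * ‖ξ (s₀ + s) - q‖ := hLip _ _
        _ ≤ K * (K * |s|) := mul_le_mul_of_nonneg_left (hδ s) hK.le
        _ ≤ K^2 * a := by nlinarith [abs_nonneg s]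
    have hdot := dot_abs_le (V (ξ (s₀ + s)) - Vq) Vq
    have he0 : (V (ξ (s₀ + s)) - Vq) 0 = V (ξ (s₀ + s)) 0 - Vq 0 := rfl
    have he1 : (V (ξ (s₀ + s)) - Vq) 1 = V (ξ (s₀ + s)) 1 - Vq 1 := rfl
    rw [he0, he1] at hdot
    have hnq : Vq 0 * Vq 0 + Vq 1 * Vq 1 = ‖Vq‖^2 := by
      have := E2_norm_sq Vq; nlinarith
    have habs := (abs_le.mp hdot).1
    have hexp : F' s - (Vq 0 * Vq 0 + Vq 1 * Vq 1)
        = (V (ξ (s₀ + s)) 0 - Vq 0) * Vq 0 + (V (ξ (s₀ + s)) 1 - Vq 1) * Vq 1 := by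
      simp only [hF']; ring
    have e := mul_le_mul_of_nonneg_right hVd hVq0.le
    nlinarith [habs, hexp, hnq, e]
  have hf0 : |f 0| ≤ ρ * ‖Vq‖ := by
    have hdot := dot_abs_le (q - z) Vq
    have he0 : (q - z) 0 = q 0 - z 0 := rfl
    have he1 : (q - z) 1 = q 1 - z 1 := rfl
    rw [he0, he1] at hdot
    have hqz : ‖q - z‖ ≤ ρ := by rw [norm_sub_rev]; exact hzq
    have hfeq : f 0 = (q 0 - z 0) * Vq 0 + (q 1 - z 1) * Vq 1 := by
      simp only [hf, add_zero]; rfl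
    rw [hfeq]
    exact hdot.trans (mul_le_mul_of_nonneg_right hqz (norm_nonneg Vq))
  -- key quantitative fact
  have hkey : ρ * ‖Vq‖ ≤ a * (‖Vq‖ * (‖Vq‖ - K^2*a)) := by
    have h1 : a * m = 2 * ρ := by rw [ha]; field_simp
    have h2 : a^2 * K^2 ≤ ρ := by
      have haa : a^2 = 4*ρ^2/m^2 := by rw [ha]; field_simp; ring
      rw [haa, div_mul_eq_mul_div, div_le_iff₀ (by positivity)]
      calc 4*ρ^2*K^2 = (4*K^2*ρ) * ρ := by ring
        _ ≤ m^2 * ρ := by nlinarith [hm ▸ hR1]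
        _ = ρ * m^2 := by ring
    have e1 : 0 ≤ a * ‖Vq‖ * (‖Vq‖ - m) :=
      mul_nonneg (mul_nonneg ha0.le hVq0.le) (sub_nonneg.mpr hVq)
    have e2 := mul_le_mul_of_nonneg_right h2 hVq0.le
    have e3 : a * m * ‖Vq‖ = 2 * ρ * ‖Vq‖ := by rw [h1]
    nlinarith [e1, e2, e3]
  -- f a ≥ 0
  obtain ⟨σ, hσ, hσs⟩ := exists_hasDerivAt_eq_slope f F' ha0 hfc.continuousOn (fun x _ => hf' x)
  have hfa : 0 ≤ f a := by
    have hσa : |σ| ≤ a := by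
      rw [abs_le]; exact ⟨by linarith [hσ.1, ha0], le_of_lt hσ.2⟩
    have hlb := hF'lb σ hσa
    have hfd : f a - f 0 = a * F' σ := by
      have := ha0.ne'; rw [hσs, sub_zero]; field_simp
    have e := mul_le_mul_of_nonneg_left hlb ha0.le
    linarith [(abs_le.mp hf0).1, hkey, e]
  -- f (-a) ≤ 0
  obtain ⟨σ', hσ', hσs'⟩ := exists_hasDerivAt_eq_slope f F' (show -a < 0 by linarith)
    hfc.continuousOn (fun x _ => hf' x)
  have hfna : f (-a) ≤ 0 := by
    have hσa : |σ'| ≤ a := by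
      rw [abs_le]; exact ⟨le_of_lt hσ'.1, by linarith [hσ'.2, ha0]⟩
    have hlb := hF'lb σ' hσa
    have hfd : f 0 - f (-a) = a * F' σ' := by
      have h0 : (0 : ℝ) - (-a) = a := by ring
      rw [h0] at hσs'
      field_simp at hσs'; linarith [hσs']
    have e := mul_le_mul_of_nonneg_left hlb ha0.le
    linarith [(abs_le.mp hf0).2, hkey, e]
  -- IVT
  obtain ⟨sstar, hsstar, hfs0⟩ := intermediate_value_Icc (show -a ≤ a by linarith)
    hfc.continuousOn (show (0:ℝ) ∈ Icc (f (-a)) (f a) from ⟨hfna, hfa⟩)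
  set p : E2 := ξ (s₀ + sstar) with hp
  set w : E2 := z - p with hw
  have hfe : f sstar = (p 0 - z 0) * Vq 0 + (p 1 - z 1) * Vq 1 := rfl
  have hwz : ‖z - ξ (s₀ + sstar)‖ = ‖w‖ := by rw [hw, hp]
  have hsabs : |sstar| ≤ a := abs_le.mpr ⟨hsstar.1, hsstar.2⟩
  have hpq : ‖p - q‖ ≤ K * a :=
    (hδ sstar).trans (mul_le_mul_of_nonneg_left hsabs hK.le)
  have hw0 : w 0 = z 0 - p 0 := rfl
  have hw1 : w 1 = z 1 - p 1 := rfl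
  have hwzq : w = (z - q) + (q - p) := by rw [hw]; abel
  have horth : w 0 * Vq 0 + w 1 * Vq 1 = 0 := by
    rw [hfe] at hfs0
    rw [hw0, hw1]; linarith [hfs0]
  have hwn : ‖w‖ ≤ ρ + K * a := by
    rw [hwzq]
    calc ‖(z - q) + (q - p)‖ ≤ ‖z - q‖ + ‖q - p‖ := norm_add_le _ _
      _ ≤ ρ + K * a := by
        have h2 : ‖q - p‖ = ‖p - q‖ := norm_sub_rev q p
        rw [h2]; linarith [hzq, hpq]
  -- MVT along the segment from p to z
  set φ : ℝ → ℝ := fun r => H (p + r • w) with hφdef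
  have hφ : ∀ r : ℝ, HasDerivAt φ (fderiv ℝ H (p + r • w) w) r := by
    intro r
    exact (hHdiff _).hasFDerivAt.comp_hasDerivAt r
      (by simpa using ((hasDerivAt_id r).smul_const w).const_add p)
  have hφc : Continuous φ := by
    rw [continuous_iff_continuousAt]; exact fun r => (hφ r).continuousAt
  obtain ⟨r, hr, hrs⟩ := exists_hasDerivAt_eq_slope φ (fun r => fderiv ℝ H (p + r • w) w)
    one_pos hφc.continuousOn (fun x _ => hφ x)
  have hφ1 : φ 1 = H z := by
    rw [hφdef]; simp only [one_smul, hw]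
    congr 1; abel
  have hφ0 : φ 0 = H p := by rw [hφdef]; simp
  have hval : fderiv ℝ H (p + r • w) w = H z - H p := by
    rw [hrs, hφ1, hφ0]; ring
  set z' : E2 := p + r • w with hz'
  have hz'mq : z' - q = (p - q) + r • w := by rw [hz']; abel
  have hz'q : ‖z' - q‖ ≤ K * a + ‖w‖ := by
    rw [hz'mq]
    calc ‖(p - q) + r • w‖ ≤ ‖p - q‖ + ‖r • w‖ := norm_add_le _ _
      _ ≤ K * a + ‖w‖ := by
        have hrn : ‖r • w‖ = |r| * ‖w‖ := by rw [norm_smul]; simp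
        have hr1 : |r| ≤ 1 := by
          rw [abs_le]; exact ⟨by linarith [hr.1], le_of_lt hr.2⟩
        have : ‖r • w‖ ≤ ‖w‖ := by
          rw [hrn]; nlinarith [norm_nonneg w, abs_nonneg r]
        linarith [hpq, this]
  -- cross-product estimates
  have hcrossq : |w 0 * Vq 1 - w 1 * Vq 0| = ‖w‖ * ‖Vq‖ := cross_abs_eq w Vq horth
  have hcrossd : |w 0 * (V z' 1 - Vq 1) - w 1 * (V z' 0 - Vq 0)| ≤ ‖w‖ * ‖V z' - Vq‖ := by
    have h := cross_abs_le w (V z' - Vq)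
    have he0 : (V z' - Vq) 0 = V z' 0 - Vq 0 := rfl
    have he1 : (V z' - Vq) 1 = V z' 1 - Vq 1 := rfl
    rw [he0, he1] at h; exact h
  have hVz'q : ‖V z' - Vq‖ ≤ K * (K * a + ‖w‖) :=
    (hLip _ _).trans (mul_le_mul_of_nonneg_left hz'q hK.le)
  have hHp : H p = H (ξ 0) := hHξ _
  have hub : |w 0 * V z' 1 - w 1 * V z' 0| ≤ θ' := by
    rw [← hDH z' w, hz', hval, hHp]; exact hθ'
  -- lower bound on the multiplier
  have hmul : c/4 ≤ ‖Vq‖ - K * (K * a + ‖w‖) := by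
    have h2a : 2 * (K^2 * a) = 4*K^2*ρ/m := by rw [ha]; field_simp; ring
    have e : K * (K * a + ‖w‖) ≤ K * (K*a + (ρ + K*a)) :=
      mul_le_mul_of_nonneg_left (by linarith [hwn]) hK.le
    have h3 : K * (K*a + (ρ + K*a)) = K * ρ + 2*(K^2*a) := by ring
    rw [h3, h2a] at e
    linarith [hVq, e, hR2, hm]
  -- conclude
  have hfinal : ‖w‖ * (c/4) ≤ θ' := by
    have habs2 : |w 0 * Vq 1 - w 1 * Vq 0| - |w 0 * (V z' 1 - Vq 1) - w 1 * (V z' 0 - Vq 0)|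
        ≤ |w 0 * V z' 1 - w 1 * V z' 0| := by
      have h := abs_sub_abs_le_abs_sub (w 0 * Vq 1 - w 1 * Vq 0)
        (w 0 * Vq 1 - w 1 * Vq 0 - (w 0 * V z' 1 - w 1 * V z' 0))
      have he : w 0 * Vq 1 - w 1 * Vq 0 - (w 0 * Vq 1 - w 1 * Vq 0 - (w 0 * V z' 1 - w 1 * V z' 0)) = w 0 * V z' 1 - w 1 * V z' 0 := by ring
      have he2 : w 0 * Vq 1 - w 1 * Vq 0 - (w 0 * V z' 1 - w 1 * V z' 0) = -(w 0 * (V z' 1 - Vq 1) - w 1 * (V z' 0 - Vq 0)) := by ring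
      rw [he, he2, abs_neg] at h
      linarith
    have e4 := mul_le_mul_of_nonneg_left hVz'q (norm_nonneg w)
    have e5 := mul_le_mul_of_nonneg_left hmul (norm_nonneg w)
    have e6 : ‖w‖ * (‖Vq‖ - K * (K * a + ‖w‖)) = ‖w‖ * ‖Vq‖ - ‖w‖ * (K * (K * a + ‖w‖)) := by ring
    rw [e6] at e5
    linarith [hcrossq ▸ habs2, hcrossd, hub, e4, e5]
  refine ⟨s₀ + sstar, ?_⟩
  rw [hwz, le_div_iff₀ hc]
  linarith [hfinal]

set_option maxHeartbeats 1000000 in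
/-- Lemma 2.10. If `H(x) = H(y)`, `y` is not on the orbit of `x`, and a
continuous curve `γ` from `x` to `y` stays within `θ` of the level `H(x)`, then somewhere
along `γ` the speed `|V|` is at most `3(K₀+1)·θ^{1/3}`. -/
theorem statement15
    (V : E2 → E2) (K₀ : NNReal) (hLip : LipschitzWith K₀ V)
    (hbound : ∀ x : E2, ‖V x‖ ≤ (K₀ : ℝ)) (hper : ZPeriodic V)
    (H : E2 → ℝ) (hH : IsStreamFunction V H)
    (θ : ℝ) (hθ : 0 < θ)
    (x y : E2) (hxy : H x = H y)
    (ξ : ℝ → E2) (hξ : IsOrbitThrough V ξ x) (hy : y ∉ range ξ)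
    (T : ℝ) (hT : 0 ≤ T) (γ : ℝ → E2) (hγc : ContinuousOn γ (Icc 0 T))
    (hγ0 : γ 0 = x) (hγT : γ T = y)
    (hmax : ∀ t ∈ Icc (0:ℝ) T, |H (γ t) - H x| ≤ θ) :
    ∃ t₀ ∈ Icc (0:ℝ) T, ‖V (γ t₀)‖ ≤ 3 * ((K₀ : ℝ) + 1) * θ ^ ((1:ℝ)/3) := by
  by_contra hcon
  push_neg at hcon
  set K : ℝ := (K₀ : ℝ) with hKdef
  set u : ℝ := θ ^ ((1:ℝ)/3) with hudef
  have hu : 0 < u := Real.rpow_pos_of_pos hθ _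
  have hu3 : u^3 = θ := by
    rw [hudef, ← Real.rpow_natCast (θ ^ ((1:ℝ)/3)) 3, ← Real.rpow_mul hθ.le]
    norm_num
  set c : ℝ := 3 * (K + 1) * u with hcdef
  have hcon' : ∀ t ∈ Icc (0:ℝ) T, c < ‖V (γ t)‖ := by
    intro t ht; exact hcon t ht
  have h0I : (0:ℝ) ∈ Icc (0:ℝ) T := ⟨le_refl 0, hT⟩
  have hKnn : 0 ≤ K := NNReal.coe_nonneg K₀
  have hc0 : 0 < c := by rw [hcdef]; positivity
  have hcK : c < K := by
    have h1 := hcon' 0 h0I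
    have h2 : ‖V (γ 0)‖ ≤ K := hbound (γ 0)
    linarith
  have hK : 0 < K := lt_trans hc0 hcK
  have hK1 : (0:ℝ) < K + 1 := by linarith
  have hu3K : 3 * (K + 1) * u < K := by rw [← hcdef]; exact hcK
  have hp1 : 0 ≤ K - 3 * (K + 1) * u := by linarith
  -- analytic preliminaries
  have hLip' : ∀ a b : E2, ‖V a - V b‖ ≤ K * ‖a - b‖ := by
    intro a b
    have := hLip.dist_le_mul a b
    rwa [dist_eq_norm, dist_eq_norm] at this
  have hHdiff : Differentiable ℝ H := hH.2.1
  have hdecomp : ∀ v : E2, v = v 0 • EuclideanSpace.single 0 (1:ℝ)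
      + v 1 • EuclideanSpace.single 1 1 := by
    intro v
    ext i
    fin_cases i <;> simp [EuclideanSpace.single_apply]
  have hDH : ∀ (z v : E2), fderiv ℝ H z v = v 0 * V z 1 - v 1 * V z 0 := by
    intro z v
    obtain ⟨h0, h1⟩ := hH.2.2.2 z
    have e1 : fderiv ℝ H z (EuclideanSpace.single 1 1) = -(V z 0) := by
      rw [h0]; ring
    calc fderiv ℝ H z v
        = fderiv ℝ H z (v 0 • EuclideanSpace.single 0 (1:ℝ) + v 1 • EuclideanSpace.single 1 1) := by
          rw [← hdecomp v]
      _ = v 0 * fderiv ℝ H z (EuclideanSpace.single 0 (1:ℝ))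
          + v 1 * fderiv ℝ H z (EuclideanSpace.single 1 1) := by
          rw [ContinuousLinearMap.map_add, ContinuousLinearMap.map_smul, ContinuousLinearMap.map_smul]; simp [smul_eq_mul]
      _ = v 0 * V z 1 - v 1 * V z 0 := by rw [← h1, e1]; ring
  have hξorb : ∀ t : ℝ, HasDerivAt ξ (V (ξ t)) t := hξ.1
  have hξ0 : ξ 0 = x := hξ.2
  have hHξ : ∀ s : ℝ, H (ξ s) = H (ξ 0) := by
    have hdz : ∀ s : ℝ, HasDerivAt (fun s => H (ξ s)) 0 s := by
      intro s
      have hcomp := (hHdiff (ξ s)).hasFDerivAt.comp_hasDerivAt s (hξorb s)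
      have hzero : fderiv ℝ H (ξ s) (V (ξ s)) = 0 := by rw [hDH]; ring
      rw [hzero] at hcomp
      exact hcomp
    intro s
    exact is_const_of_deriv_eq_zero (fun t => (hdz t).differentiableAt)
      (fun t => (hdz t).deriv) s 0
  have hspeed : ∀ s s' : ℝ, ‖ξ s - ξ s'‖ ≤ K * |s - s'| := by
    intro s s'
    have := Convex.norm_image_sub_le_of_norm_hasDerivWithin_le
      (f := ξ) (f' := fun t => V (ξ t)) (C := K)
      (fun t _ => (hξorb t).hasDerivWithinAt) (fun t _ => hbound (ξ t)) convex_univ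
      (mem_univ s') (mem_univ s)
    simpa [Real.norm_eq_abs] using this
  -- radii
  set ρ₁ : ℝ := 4 * θ / c with hρ₁def
  set ρ : ℝ := 3 * ρ₁ with hρdef
  have hρ₁0 : 0 < ρ₁ := by rw [hρ₁def]; positivity
  have hρ0 : 0 < ρ := by rw [hρdef]; positivity
  have hρeq : ρ = 4 * u^2 / (K + 1) := by
    rw [hρdef, hρ₁def, hcdef, ← hu3]
    field_simp
  -- numeric facts
  have hp2 : 40 * K^2 ≤ 9 * (K+1)^3 := by nlinarith [hK.le, sq_nonneg (K-1), sq_nonneg K]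
  have hq1 : 40 * K * u ≤ 3 * (K+1)^2 := by
    nlinarith [mul_nonneg (by positivity : (0:ℝ) ≤ 40*K) hp1, hp2, hK1]
  have hN0 : K * ρ ≤ c / 10 := by
    have e1 : K * ρ * (10 * (K+1)) = 40 * K * u^2 := by
      rw [hρeq]; field_simp; ring
    have e2 : (c / 10) * (10 * (K+1)) = 3 * (K+1)^2 * u := by
      rw [hcdef]; field_simp
    have key : K * ρ * (10 * (K+1)) ≤ (c / 10) * (10 * (K+1)) := by
      rw [e1, e2]
      nlinarith [mul_le_mul_of_nonneg_right hq1 hu.le]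
    exact le_of_mul_le_mul_right key (by positivity)
  have hp3 : 1600 * K^2 ≤ 729 * (K+1)^3 := by nlinarith [hK.le, sq_nonneg K]
  have hN1 : 4 * K^2 * ρ ≤ (9 * c / 10)^2 := by
    have e1 : 4 * K^2 * ρ * ((K+1) * 100) = 1600 * K^2 * u^2 := by
      rw [hρeq]; field_simp; ring
    have e2 : (9 * c / 10)^2 * ((K+1) * 100) = 729 * (K+1)^3 * u^2 := by
      rw [hcdef]; field_simp; ring
    have key : 4 * K^2 * ρ * ((K+1) * 100) ≤ (9 * c / 10)^2 * ((K+1) * 100) := by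
      rw [e1, e2]
      nlinarith [mul_le_mul_of_nonneg_right hp3 (sq_nonneg u)]
    exact le_of_mul_le_mul_right key (by positivity)
  have hp5 : 3920 * K^2 ≤ 1053 * (K+1)^3 := by nlinarith [hK.le, sq_nonneg (K-1), sq_nonneg K]
  have hN2 : K * ρ + 4 * K^2 * ρ / (9 * c / 10) ≤ 9 * c / 10 - c / 4 := by
    have hm0 : (0:ℝ) < 9 * c / 10 := by positivity
    have t2 : 2160 * K * (K+1) * u^3 ≤ 720 * K^2 * u^2 := by
      nlinarith [mul_nonneg (mul_nonneg (by positivity : (0:ℝ) ≤ 720 * K) (sq_nonneg u)) hp1]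
    have key2 : K * ρ * (9 * c / 10) + 4 * K^2 * ρ ≤ (9 * c / 10 - c / 4) * (9 * c / 10) := by
      have key : (K * ρ * (9 * c / 10) + 4 * K^2 * ρ) * (200 * (K+1))
          ≤ ((9 * c / 10 - c / 4) * (9 * c / 10)) * (200 * (K+1)) := by
        have e1 : (K * ρ * (9 * c / 10) + 4 * K^2 * ρ) * (200 * (K+1))
            = 2160 * K * (K+1) * u^3 + 3200 * K^2 * u^2 := by
          rw [hρeq, hcdef]; field_simp; ring
        have e2 : ((9 * c / 10 - c / 4) * (9 * c / 10)) * (200 * (K+1))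
            = 1053 * (K+1)^3 * u^2 := by
          rw [hcdef]; field_simp; ring
        rw [e1, e2]
        nlinarith [t2, mul_le_mul_of_nonneg_right hp5 (sq_nonneg u)]
      exact le_of_mul_le_mul_right key (by positivity)
    calc K * ρ + 4 * K^2 * ρ / (9 * c / 10)
        = (K * ρ * (9 * c / 10) + 4 * K^2 * ρ) / (9 * c / 10) := by field_simp
      _ ≤ ((9 * c / 10 - c / 4) * (9 * c / 10)) / (9 * c / 10) := by gcongr
      _ = 9 * c / 10 - c / 4 := by field_simp
  -- packaged trapping application
  have htrap : ∀ (z : E2) (s₀ : ℝ), ‖z - ξ s₀‖ ≤ ρ → ∀ θ'' : ℝ, |H z - H (ξ 0)| ≤ θ'' →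
      c < ‖V z‖ → ∃ s : ℝ, ‖z - ξ s‖ ≤ 4 * θ'' / c := by
    intro z s₀ hzq θ'' hθ'' hVz
    have hVq : 9 * c / 10 ≤ ‖V (ξ s₀)‖ := by
      have h1 : ‖V z‖ - ‖V (ξ s₀)‖ ≤ ‖V z - V (ξ s₀)‖ := norm_sub_norm_le _ _
      have h2 : ‖V z - V (ξ s₀)‖ ≤ K * ‖z - ξ s₀‖ := hLip' _ _
      have h3 : K * ‖z - ξ s₀‖ ≤ K * ρ := mul_le_mul_of_nonneg_left hzq hK.le
      linarith [hN0]
    exact trap V K hK hLip' H hHdiff hDH ξ hξorb hHξ hspeed c ρ θ'' hc0 hρ0 z s₀ hzq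
      hVq hθ'' hN1 hN2
  -- the set of good times
  have hrne : (range ξ).Nonempty := ⟨ξ 0, mem_range_self 0⟩
  set S : Set ℝ := Icc 0 T ∩ (fun t => infDist (γ t) (range ξ)) ⁻¹' (Iic ρ₁) with hSdef
  have hFcont : ContinuousOn (fun t => infDist (γ t) (range ξ)) (Icc 0 T) :=
    (continuous_infDist_pt (range ξ)).comp_continuousOn hγc
  have hSclosed : IsClosed S :=
    hFcont.preimage_isClosed_of_isClosed isClosed_Icc isClosed_Iic
  have hS0 : (0:ℝ) ∈ S := by
    refine ⟨h0I, ?_⟩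
    show infDist (γ 0) (range ξ) ≤ ρ₁
    have hd : dist (γ 0) (ξ 0) = 0 := by rw [hγ0, hξ0, dist_self]
    have h := infDist_le_dist_of_mem (mem_range_self (f := ξ) 0) (x := γ 0)
    rw [hd] at h
    linarith
  have hSbdd : BddAbove S := ⟨T, fun t ht => ht.1.2⟩
  set t₁ : ℝ := sSup S with ht₁def
  have ht₁S : t₁ ∈ S := hSclosed.csSup_mem ⟨0, hS0⟩ hSbdd
  have ht₁T : t₁ ≤ T := ht₁S.1.2
  have ht₁d : infDist (γ t₁) (range ξ) ≤ ρ₁ := ht₁S.2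
  have hTS : T ∈ S := by
    rcases eq_or_lt_of_le ht₁T with heq | hlt
    · rwa [← heq]
    exfalso
    have hcw : ContinuousWithinAt γ (Icc 0 T) t₁ := hγc t₁ ht₁S.1
    rw [Metric.continuousWithinAt_iff] at hcw
    obtain ⟨δ, hδ0, hδ⟩ := hcw ρ₁ hρ₁0
    have hd2 : infDist (γ t₁) (range ξ) < 2 * ρ₁ := lt_of_le_of_lt ht₁d (by linarith)
    obtain ⟨q, hqmem, hqd⟩ := (infDist_lt_iff hrne).mp hd2
    set t' : ℝ := min (t₁ + δ/2) T with ht'def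
    have ht'gt : t₁ < t' := lt_min (by linarith) hlt
    have ht'I : t' ∈ Icc (0:ℝ) T := ⟨le_trans ht₁S.1.1 ht'gt.le, min_le_right _ _⟩
    have ht'd : dist t' t₁ < δ := by
      rw [Real.dist_eq, abs_of_nonneg (by linarith : (0:ℝ) ≤ t' - t₁)]
      have : t' ≤ t₁ + δ/2 := min_le_left _ _
      linarith
    have hγd : dist (γ t') (γ t₁) < ρ₁ := hδ ht'I ht'd
    have hq' : ‖γ t' - q‖ ≤ ρ := by
      have htri := dist_triangle (γ t') (γ t₁) q
      rw [← dist_eq_norm, hρdef]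
      linarith
    obtain ⟨s₀, rfl⟩ := hqmem
    obtain ⟨s, hs⟩ := htrap (γ t') s₀ hq' θ (by rw [hξ0]; exact hmax t' ht'I) (hcon' t' ht'I)
    have ht'S : t' ∈ S := by
      refine ⟨ht'I, ?_⟩
      show infDist (γ t') (range ξ) ≤ ρ₁
      have h := infDist_le_dist_of_mem (mem_range_self (f := ξ) s) (x := γ t')
      rw [dist_eq_norm] at h
      rw [hρ₁def]
      exact h.trans hs
    have : t' ≤ t₁ := le_csSup hSbdd ht'S
    linarith
  -- final step at time T
  have hTd : infDist (γ T) (range ξ) < ρ := by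
    refine lt_of_le_of_lt hTS.2 ?_
    rw [hρdef]; linarith
  obtain ⟨q, hqmem, hqd⟩ := (infDist_lt_iff hrne).mp hTd
  obtain ⟨s₀, rfl⟩ := hqmem
  have hq' : ‖γ T - ξ s₀‖ ≤ ρ := by rw [← dist_eq_norm]; exact hqd.le
  have hθ0 : |H (γ T) - H (ξ 0)| ≤ 0 := by
    rw [hγT, hξ0, ← hxy]
    simp
  obtain ⟨s, hs⟩ := htrap (γ T) s₀ hq' 0 hθ0 (hcon' T ⟨hT, le_refl T⟩)
  have hle0 : ‖γ T - ξ s‖ ≤ 0 := by simpa using hs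
  have hEq : γ T = ξ s := by
    have := le_antisymm hle0 (norm_nonneg _)
    rwa [norm_eq_zero, sub_eq_zero] at this
  exact hy ⟨s, by rw [← hγT, hEq]⟩

end
end

section
/- There exist absolute constants c > 0 and C > 0 such that the following holds for the two-dimensional cellular flow. (a) For every A ≥ 2, every k ∈ ℤ, every T > 0, and every A-admissible control path γ = (γ₁,γ₂) : [0,T] → ℝ² with γ₁(0) = k and γ₁(T) = k + 1, one has T ≥ c·log A / A. (b) Consequently, for every A ≥ 2 and for p = (±1,0) or p = (0,±1), the turbulent flame speed satisfies s_T(p,A) ≤ C·A / log A. -/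
open MeasureTheory Filter Topology Set Metric Bornology

noncomputable section

/-- the two-dimensional cellular flow `V = (−H_{x₂}, H_{x₁})` for the stream function
`H(x) = sin(2πx₁)·sin(2πx₂)`. -/
def cellV : E2 → E2 := fun x =>
  WithLp.toLp 2 ![ -(2 * Real.pi * Real.sin (2 * Real.pi * x 0) * Real.cos (2 * Real.pi * x 1)),
     2 * Real.pi * Real.cos (2 * Real.pi * x 0) * Real.sin (2 * Real.pi * x 1) ]


section Statement18Aux
open Real

variable {A : ℝ}

def phi (A s : ℝ) : ℝ := (1 + 2*π*A*|Real.sin (2*π*s)|)⁻¹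

def FF (A x : ℝ) : ℝ := ∫ s in (0:ℝ)..x, phi A s

variable {A : ℝ}

lemma phi_denom_pos (hA : 0 ≤ A) (s : ℝ) : 0 < 1 + 2*π*A*|Real.sin (2*π*s)| := by
  have : 0 ≤ 2*π*A*|Real.sin (2*π*s)| := by positivity
  linarith

lemma phi_pos (hA : 0 ≤ A) (s : ℝ) : 0 < phi A s := inv_pos.2 (phi_denom_pos hA s)

lemma phi_le_one (hA : 0 ≤ A) (s : ℝ) : phi A s ≤ 1 := by
  rw [phi, inv_le_one_iff₀]
  right
  have : 0 ≤ 2*π*A*|Real.sin (2*π*s)| := by positivity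
  linarith

lemma phi_cont (hA : 0 ≤ A) : Continuous (phi A) := by
  apply Continuous.inv₀
  · continuity
  · intro s; exact ne_of_gt (phi_denom_pos hA s)

lemma phi_periodic : Function.Periodic (phi A) 1 := by
  intro s
  have : 2*π*(s+1) = 2*π*s + 2*π := by ring
  rw [phi, phi, this, Real.sin_add_two_pi]

lemma FF_hasDerivAt (hA : 0 ≤ A) (x : ℝ) : HasDerivAt (FF A) (phi A x) x :=
  intervalIntegral.integral_hasDerivAt_right
    ((phi_cont hA).intervalIntegrable _ _)
    ((phi_cont hA).stronglyMeasurable.stronglyMeasurableAtFilter)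
    (phi_cont hA).continuousAt

lemma FF_sub (hA : 0 ≤ A) (x y : ℝ) : FF A x - FF A y = ∫ s in y..x, phi A s := by
  rw [FF, FF, intervalIntegral.integral_interval_sub_left
    ((phi_cont hA).intervalIntegrable _ _) ((phi_cont hA).intervalIntegrable _ _)]

lemma FF_lipschitz (hA : 0 ≤ A) : LipschitzWith 1 (FF A) := by
  apply LipschitzWith.of_dist_le_mul
  intro x y
  rw [Real.dist_eq, Real.dist_eq, NNReal.coe_one, one_mul]
  calc |FF A x - FF A y| = ‖∫ s in y..x, phi A s‖ := by rw [FF_sub hA, Real.norm_eq_abs]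
    _ ≤ 1 * |x - y| := intervalIntegral.norm_integral_le_of_norm_le_const (fun s _ => by
        rw [Real.norm_eq_abs, abs_of_pos (phi_pos hA s)]; exact phi_le_one hA s)
    _ = |x - y| := one_mul _

lemma FF_zero : FF A 0 = 0 := by simp [FF]

lemma FF_add_one (hA : 0 ≤ A) (x : ℝ) : FF A (x + 1) = FF A x + FF A 1 := by
  have h := FF_sub hA (x+1) x
  have h2 : (∫ s in x..x+1, phi A s) = ∫ s in (0:ℝ)..0+1, phi A s :=
    phi_periodic.intervalIntegral_add_eq x 0
  rw [h2] at h
  simp only [zero_add] at h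
  have : FF A 1 = ∫ s in (0:ℝ)..1, phi A s := rfl
  linarith [h]

lemma FF_nat (hA : 0 ≤ A) (n : ℕ) : FF A n = n * FF A 1 := by
  induction n with
  | zero => simp [FF_zero]
  | succ m ih =>
      push_cast
      rw [FF_add_one hA, ih]
      ring

lemma FF_mono (hA : 0 ≤ A) : Monotone (FF A) := by
  intro x y hxy
  have : FF A y - FF A x = ∫ s in x..y, phi A s := FF_sub hA y x
  have hnn : 0 ≤ ∫ s in x..y, phi A s :=
    intervalIntegral.integral_nonneg hxy (fun s _ => (phi_pos hA s).le)
  linarith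

lemma FF_neg (hA : 0 ≤ A) (x : ℝ) : FF A (-x) = - FF A x := by
  have heven : ∀ s, phi A (-s) = phi A s := by
    intro s
    rw [phi, phi]
    congr 1
    rw [show 2*π*(-s) = -(2*π*s) by ring, Real.sin_neg, abs_neg]
  have h1 : (∫ s in (0:ℝ)..x, phi A (-s)) = ∫ s in -x..(-0:ℝ), phi A s :=
    intervalIntegral.integral_comp_neg (a := 0) (b := x) (fun s => phi A s)
  simp only [neg_zero] at h1
  have h2 : (∫ s in (0:ℝ)..x, phi A (-s)) = FF A x := by
    rw [FF]; congr 1; ext s; rw [heven]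
  rw [FF, intervalIntegral.integral_symm]
  rw [← h1, h2]

lemma pi_sq_lt_ten : π^2 < 10 := by
  nlinarith [Real.pi_lt_d2, Real.pi_pos]

lemma FF_one_ge (hA : 2 ≤ A) : Real.log A / (40*A) ≤ FF A 1 := by
  have hA0 : (0:ℝ) ≤ A := by linarith
  have hApos : (0:ℝ) < A := by linarith
  set b : ℝ := 4*π^2*A with hb
  have hbpos : 0 < b := by positivity
  -- integrability
  have hcont : Continuous (phi A) := phi_cont hA0
  have hpsi_cont : ContinuousOn (fun s => (1 + b*s)⁻¹) (Icc (0:ℝ) (1/4)) := by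
    apply ContinuousOn.inv₀ (by fun_prop)
    intro s hs
    have : 0 ≤ b * s := mul_nonneg hbpos.le hs.1
    intro hcon; linarith [hcon]
  have huIcc : uIcc (0:ℝ) (1/4) = Icc (0:ℝ) (1/4) := uIcc_of_le (by norm_num)
  have hint_psi : IntervalIntegrable (fun s => (1 + b*s)⁻¹) volume 0 (1/4) := by
    apply ContinuousOn.intervalIntegrable
    rwa [huIcc]
  -- pointwise bound on Icc 0 (1/4)
  have hpt : ∀ s ∈ Icc (0:ℝ) (1/4), (1 + b*s)⁻¹ ≤ phi A s := by
    intro s hs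
    have h2s : 0 ≤ 2*π*s := mul_nonneg (by positivity) hs.1
    have h2s' : 2*π*s ≤ π := by
      have := hs.2
      nlinarith [Real.pi_pos]
    have hsin_nonneg : 0 ≤ Real.sin (2*π*s) := Real.sin_nonneg_of_nonneg_of_le_pi h2s h2s'
    have hsin_le : Real.sin (2*π*s) ≤ 2*π*s := Real.sin_le h2s
    have : 2*π*A*|Real.sin (2*π*s)| ≤ b*s := by
      rw [abs_of_nonneg hsin_nonneg, hb]
      nlinarith [Real.pi_pos]
    rw [phi]
    apply inv_anti₀ (phi_denom_pos hA0 s)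
    linarith
  -- value of the comparison integral
  have hG : ∀ s ∈ uIcc (0:ℝ) (1/4), HasDerivAt (fun u => Real.log (1 + b*u) / b) ((1 + b*s)⁻¹) s := by
    intro s hs
    rw [huIcc] at hs
    have hpos : 0 < 1 + b*s := by
      have : 0 ≤ b * s := mul_nonneg hbpos.le hs.1
      linarith
    have h1 : HasDerivAt (fun u => 1 + b*u) b s := by
      simpa using ((hasDerivAt_id s).const_mul b).const_add 1
    have h2 : HasDerivAt (fun u => Real.log (1 + b*u)) ((1 + b*s)⁻¹ * b) s := by
      have := (Real.hasDerivAt_log hpos.ne').comp s h1; exact this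
    have h3 := h2.div_const b
    simpa [mul_div_assoc, div_self hbpos.ne'] using h3
  have hval : (∫ s in (0:ℝ)..(1/4), (1 + b*s)⁻¹) = Real.log (1 + b/4) / b := by
    rw [intervalIntegral.integral_eq_sub_of_hasDerivAt hG hint_psi]
    rw [mul_zero, add_zero, Real.log_one, zero_div, sub_zero, mul_one_div]
  -- compare
  have hcmp : (∫ s in (0:ℝ)..(1/4), (1 + b*s)⁻¹) ≤ ∫ s in (0:ℝ)..(1/4), phi A s := by
    apply intervalIntegral.integral_mono_on (by norm_num) hint_psi
      (hcont.intervalIntegrable _ _) hpt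
  have hsplit : (∫ s in (0:ℝ)..(1/4), phi A s) ≤ FF A 1 := by
    have hadd : (∫ s in (0:ℝ)..(1/4), phi A s) + (∫ s in (1/4:ℝ)..1, phi A s) = FF A 1 :=
      intervalIntegral.integral_add_adjacent_intervals
        (hcont.intervalIntegrable _ _) (hcont.intervalIntegrable _ _)
    have : 0 ≤ ∫ s in (1/4:ℝ)..1, phi A s :=
      intervalIntegral.integral_nonneg (by norm_num) (fun s _ => (phi_pos hA0 s).le)
    linarith
  -- log comparison
  have hlog1 : Real.log A ≤ Real.log (1 + b/4) := by
    apply Real.log_le_log hApos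
    have h4 : A ≤ b/4 := by
      rw [hb]
      have hpi : (1:ℝ) ≤ π^2 := by nlinarith [Real.pi_gt_three]
      nlinarith [mul_le_mul_of_nonneg_right hpi hA0]
    linarith
  have hlogpos : 0 < Real.log A := Real.log_pos (by linarith)
  have hb40 : b ≤ 40*A := by
    rw [hb]; nlinarith [pi_sq_lt_ten]
  calc Real.log A / (40*A) ≤ Real.log A / b := by
        apply div_le_div_of_nonneg_left hlogpos.le hbpos hb40
    _ ≤ Real.log (1 + b/4) / b := by
        gcongr
    _ = ∫ s in (0:ℝ)..(1/4), (1 + b*s)⁻¹ := hval.symm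
    _ ≤ FF A 1 := le_trans hcmp hsplit

lemma FF_one_pos (hA : 2 ≤ A) : 0 < FF A 1 := by
  have := FF_one_ge hA
  have hlogpos : 0 < Real.log A := Real.log_pos (by linarith)
  have : 0 < Real.log A / (40*A) := by positivity
  linarith [FF_one_ge hA]

lemma le_of_FF_le (hA : 2 ≤ A) {x t : ℝ} (ht : 0 ≤ t) (h : FF A x ≤ t) :
    x ≤ t / FF A 1 + 1 := by
  have hA0 : (0:ℝ) ≤ A := by linarith
  have h1 : 0 < FF A 1 := FF_one_pos hA
  rcases le_or_gt x 1 with hx | hx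
  · have : 0 ≤ t / FF A 1 := div_nonneg ht h1.le
    linarith
  · set n := ⌊x⌋₊ with hn
    have hnx : (n:ℝ) ≤ x := Nat.floor_le (by linarith)
    have hxn : x < n + 1 := Nat.lt_floor_add_one x
    have : (n:ℝ) * FF A 1 ≤ t := by
      calc (n:ℝ) * FF A 1 = FF A n := (FF_nat hA0 n).symm
        _ ≤ FF A x := FF_mono hA0 hnx
        _ ≤ t := h
    have hnt : (n:ℝ) ≤ t / FF A 1 := (le_div_iff₀ h1).2 this
    linarith
lemma lemmaA (t : ℝ) (ht : 0 < t) (f : ℝ → ℝ) (L : NNReal)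
    (hf : LipschitzOnWith L f (Icc 0 t))
    (hae : ∀ᵐ s ∂(volume : Measure ℝ), s ∈ Icc 0 t → ∃ d, HasDerivAt f d s ∧ |d| ≤ 1) :
    |f t - f 0| ≤ t := by
  -- the clamped function
  set c : ℝ → ℝ := fun s => ((Set.projIcc 0 t ht.le s : Icc (0:ℝ) t) : ℝ) with hc_def
  have hc_lip : LipschitzWith 1 c := by
    have h1 : LipschitzWith 1 (Set.projIcc 0 t ht.le) := LipschitzWith.projIcc ht.le
    exact (LipschitzWith.subtype_val _).comp h1 |>.weaken (by norm_num)
  have hc_mem : ∀ s, c s ∈ Icc (0:ℝ) t := fun s => (Set.projIcc 0 t ht.le s).2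
  have hc_eq : ∀ s ∈ Icc (0:ℝ) t, c s = s := by
    intro s hs
    simp [hc_def, Set.projIcc_of_mem ht.le hs]
  have hc_right : ∀ s, t ≤ s → c s = t := by
    intro s hs
    simp [hc_def, Set.projIcc_of_right_le ht.le hs]
  set g : ℝ → ℝ := fun s => f (c s) with hg_def
  have hg_lip : LipschitzWith L g := by
    apply LipschitzWith.of_dist_le_mul
    intro x y
    calc dist (g x) (g y) ≤ L * dist (c x) (c y) :=
          hf.dist_le_mul _ (hc_mem x) _ (hc_mem y)
      _ ≤ L * dist x y := by
          have h2 : dist (c x) (c y) ≤ dist x y := by simpa using hc_lip.dist_le_mul x y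
          exact mul_le_mul_of_nonneg_left h2 L.2
  have hg_cont : Continuous g := hg_lip.continuous
  have hg_eq : ∀ s ∈ Icc (0:ℝ) t, g s = f s := fun s hs => by rw [hg_def]; simp [hc_eq s hs]
  have hg_t : g t = f t := hg_eq t ⟨ht.le, le_refl t⟩
  have hg_0 : g 0 = f 0 := hg_eq 0 ⟨le_refl 0, ht.le⟩
  have hgInt : ∀ a b : ℝ, IntervalIntegrable g volume a b :=
    fun a b => hg_cont.intervalIntegrable a b
  -- difference quotients
  set h : ℕ → ℝ := fun n => 1 / ((n:ℝ)+1) with hh_def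
  have hh_pos : ∀ n, 0 < h n := fun n => by positivity
  have hh_tendsto : Tendsto h atTop (nhds 0) := tendsto_one_div_add_atTop_nhds_zero_nat
  set G : ℕ → ℝ → ℝ := fun n s => (g (s + h n) - g s) / h n with hG_def
  -- uniform bound
  have hG_bound : ∀ n s, |G n s| ≤ L := by
    intro n s
    have h1 : dist (g (s + h n)) (g s) ≤ L * dist (s + h n) s := hg_lip.dist_le_mul _ _
    rw [Real.dist_eq, Real.dist_eq] at h1
    have h2 : |s + h n - s| = h n := by
      rw [show s + h n - s = h n by ring, abs_of_pos (hh_pos n)]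
    rw [h2] at h1
    rw [hG_def]
    rw [abs_div, abs_of_pos (hh_pos n), div_le_iff₀ (hh_pos n)]
    simpa [mul_comm] using h1
  -- integral identity
  have hkey : ∀ n, (∫ s in (0:ℝ)..t, G n s) = g t - (∫ s in (0:ℝ)..(h n), g s) / h n := by
    intro n
    have e1 : (∫ s in (0:ℝ)..t, g (s + h n)) = ∫ s in (0 + h n)..(t + h n), g s :=
      intervalIntegral.integral_comp_add_right g (h n)
    have e2 : (∫ s in (0:ℝ)..(h n), g s) + (∫ s in (h n)..(t + h n), g s)
        = ∫ s in (0:ℝ)..(t + h n), g s :=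
      intervalIntegral.integral_add_adjacent_intervals (hgInt _ _) (hgInt _ _)
    have e3 : (∫ s in (0:ℝ)..t, g s) + (∫ s in t..(t + h n), g s)
        = ∫ s in (0:ℝ)..(t + h n), g s :=
      intervalIntegral.integral_add_adjacent_intervals (hgInt _ _) (hgInt _ _)
    have e4 : (∫ s in t..(t + h n), g s) = h n * g t := by
      have : ∀ s ∈ Set.uIcc t (t + h n), g s = g t := by
        intro s hs
        rw [Set.uIcc_of_le (by linarith [hh_pos n])] at hs
        simp only [hg_def]
        rw [hc_right s hs.1, hc_right t le_rfl]
      rw [intervalIntegral.integral_congr this]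
      simp [intervalIntegral.integral_const]
      try ring
    have hshift : IntervalIntegrable (fun s => g (s + h n)) volume 0 t :=
      (hg_cont.comp (continuous_id.add continuous_const)).intervalIntegrable _ _
    have e5 : (∫ s in (0:ℝ)..t, G n s)
        = ((∫ s in (0:ℝ)..t, g (s + h n)) - ∫ s in (0:ℝ)..t, g s) / h n := by
      simp only [hG_def]
      rw [intervalIntegral.integral_div, intervalIntegral.integral_sub hshift (hgInt _ _)]
    rw [e5, e1]
    rw [zero_add] at e1 ⊢
    rw [sub_div' (hh_pos n).ne', div_left_inj' (hh_pos n).ne']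
    linarith [e2, e3, e4]
  -- limit of RHS
  have hlim1 : Tendsto (fun n => ∫ s in (0:ℝ)..t, G n s) atTop (nhds (f t - f 0)) := by
    have herr : ∀ n, |(∫ s in (0:ℝ)..(h n), g s) / h n - g 0| ≤ L * h n := by
      intro n
      have hsub : (∫ s in (0:ℝ)..(h n), g s) - (h n) * g 0 = ∫ s in (0:ℝ)..(h n), (g s - g 0) := by
        rw [intervalIntegral.integral_sub (hgInt _ _) (intervalIntegrable_const)]
        simp [intervalIntegral.integral_const]
        try ring
      have hbd : ‖∫ s in (0:ℝ)..(h n), (g s - g 0)‖ ≤ (L * h n) * |h n - 0| := by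
        apply intervalIntegral.norm_integral_le_of_norm_le_const
        intro s hs
        rw [Set.uIoc_of_le (hh_pos n).le] at hs
        have h1 : dist (g s) (g 0) ≤ L * dist s 0 := hg_lip.dist_le_mul _ _
        rw [Real.dist_eq, Real.dist_eq, sub_zero] at h1
        rw [Real.norm_eq_abs]
        have : |s| ≤ h n := by
          rw [abs_of_pos hs.1]; exact hs.2
        have hL : (0:ℝ) ≤ L := L.2
        calc |g s - g 0| ≤ L * |s| := h1
          _ ≤ L * h n := by nlinarith
      rw [sub_zero, Real.norm_eq_abs, abs_of_pos (hh_pos n)] at hbd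
      have heq : (∫ s in (0:ℝ)..(h n), g s) / h n - g 0
          = (∫ s in (0:ℝ)..(h n), (g s - g 0)) / h n := by
        rw [← hsub]
        rw [sub_div, mul_div_cancel_left₀ _ (hh_pos n).ne']
      rw [heq, abs_div, abs_of_pos (hh_pos n), div_le_iff₀ (hh_pos n)]
      calc |∫ s in (0:ℝ)..(h n), (g s - g 0)| ≤ (L * h n) * h n := hbd
        _ = L * h n * h n := by ring
    -- error term tends to zero
    set err : ℕ → ℝ := fun n => (∫ s in (0:ℝ)..(h n), g s) / h n - g 0 with herr_def
    have herr0 : Tendsto err atTop (nhds 0) := by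
      apply squeeze_zero_norm (fun n => herr n)
      have : Tendsto (fun n => (L:ℝ) * h n) atTop (nhds ((L:ℝ) * 0)) :=
        hh_tendsto.const_mul _
      simpa using this
    have hcongr : ∀ n, (∫ s in (0:ℝ)..t, G n s) = (f t - f 0) - err n := by
      intro n
      rw [hkey n, herr_def]
      simp only
      rw [hg_t, hg_0]
      ring
    have : Tendsto (fun n => (f t - f 0) - err n) atTop (nhds ((f t - f 0) - 0)) :=
      (tendsto_const_nhds).sub herr0
    rw [sub_zero] at this
    exact this.congr (fun n => (hcongr n).symm)
  -- dominated convergence towards the derivative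
  set μ : MeasureTheory.Measure ℝ := volume.restrict (Ioc 0 t) with hμ_def
  set D : ℝ → ℝ := deriv g with hD_def
  have hmeas_D : MeasureTheory.AEStronglyMeasurable D μ :=
    (stronglyMeasurable_deriv g).aestronglyMeasurable
  have hae' : ∀ᵐ s ∂μ, (Tendsto (fun n => G n s) atTop (nhds (D s)) ∧ |D s| ≤ 1) := by
    have h1 : ∀ᵐ s ∂μ, s ∈ Icc 0 t → ∃ d, HasDerivAt f d s ∧ |d| ≤ 1 :=
      MeasureTheory.ae_restrict_of_ae hae
    have h2 : ∀ᵐ s ∂μ, s ∈ Ioc (0:ℝ) t := MeasureTheory.ae_restrict_mem measurableSet_Ioc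
    have h3 : ∀ᵐ s ∂μ, s ≠ t := by
      apply MeasureTheory.ae_restrict_of_ae
      rw [MeasureTheory.ae_iff]
      have : {s : ℝ | ¬ s ≠ t} = {t} := by ext s; simp
      rw [this]
      exact Real.volume_singleton
    filter_upwards [h1, h2, h3] with s h1s h2s h3s
    have hsIoo : s ∈ Ioo (0:ℝ) t := ⟨h2s.1, lt_of_le_of_ne h2s.2 h3s⟩
    obtain ⟨d, hd, hd1⟩ := h1s (Ioo_subset_Icc_self hsIoo)
    have hfg : g =ᶠ[nhds s] f :=
      Filter.eventuallyEq_of_mem (Ioo_mem_nhds hsIoo.1 hsIoo.2)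
        (fun x hx => hg_eq x (Ioo_subset_Icc_self hx))
    have hdg : HasDerivAt g d s := hd.congr_of_eventuallyEq hfg
    have hDs : D s = d := hdg.deriv
    refine ⟨?_, by rw [hDs]; exact hd1⟩
    rw [hDs]
    have hslope := hasDerivAt_iff_tendsto_slope.1 hdg
    have hseq : Tendsto (fun n => s + h n) atTop (nhdsWithin s {s}ᶜ) := by
      apply tendsto_nhdsWithin_of_tendsto_nhds_of_eventually_within
      · simpa using (tendsto_const_nhds (x := s)).add hh_tendsto
      · filter_upwards with n
        simp only [Set.mem_compl_iff, Set.mem_singleton_iff]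
        have := hh_pos n
        intro hcon
        nlinarith [hcon]
    have := hslope.comp hseq
    apply this.congr
    intro n
    simp only [Function.comp_apply, slope_def_field]
    rw [hG_def]
    simp only
    congr 1
    ring
  have hG_meas : ∀ n, MeasureTheory.AEStronglyMeasurable (G n) μ := by
    intro n
    apply Continuous.aestronglyMeasurable
    exact ((hg_cont.comp (continuous_id.add continuous_const)).sub hg_cont).div_const _
  have hbound_int : MeasureTheory.Integrable (fun _ : ℝ => (L:ℝ)) μ := by
    rw [hμ_def]
    exact MeasureTheory.integrableOn_const (by rw [Real.volume_Ioc]; exact ENNReal.ofReal_ne_top)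
  have hDCT : Tendsto (fun n => ∫ s, G n s ∂μ) atTop (nhds (∫ s, D s ∂μ)) := by
    apply MeasureTheory.tendsto_integral_of_dominated_convergence (fun _ => (L:ℝ))
      hG_meas hbound_int
    · intro n
      filter_upwards with s
      rw [Real.norm_eq_abs]
      exact hG_bound n s
    · filter_upwards [hae'] with s hs using hs.1
  have hGint_eq : ∀ n, (∫ s in (0:ℝ)..t, G n s) = ∫ s, G n s ∂μ := by
    intro n
    rw [intervalIntegral.integral_of_le ht.le, hμ_def]
  have hmain : f t - f 0 = ∫ s, D s ∂μ := by
    apply tendsto_nhds_unique _ hDCT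
    exact (hlim1.congr (fun n => hGint_eq n))
  -- conclude
  have hone_int : MeasureTheory.Integrable (fun _ : ℝ => (1:ℝ)) μ := by
    rw [hμ_def]
    exact MeasureTheory.integrableOn_const (by rw [Real.volume_Ioc]; exact ENNReal.ofReal_ne_top)
  have hD_int : MeasureTheory.Integrable D μ := by
    apply MeasureTheory.Integrable.mono' hone_int hmeas_D
    filter_upwards [hae'] with s hs
    rw [Real.norm_eq_abs]
    exact hs.2
  have hnorm : ‖∫ s, D s ∂μ‖ ≤ ∫ s, (1:ℝ) ∂μ := by
    apply MeasureTheory.norm_integral_le_of_norm_le hone_int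
    filter_upwards [hae'] with s hs
    rw [Real.norm_eq_abs]
    exact hs.2
  have hμt : (∫ s, (1:ℝ) ∂μ) = t := by
    rw [MeasureTheory.integral_const, hμ_def]
    simp [Real.volume_Ioc, ENNReal.toReal_ofReal ht.le, ht.le]
  rw [hmain, ← Real.norm_eq_abs]
  rw [hμt] at hnorm
  exact hnorm

lemma ecoord (x : E2) (i : Fin 2) : |x i| ≤ ‖x‖ := by
  rw [EuclideanSpace.norm_eq]
  rw [show |x i| = Real.sqrt (|x i|^2) by rw [Real.sqrt_sq_eq_abs, abs_abs]]
  apply Real.sqrt_le_sqrt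
  have : ‖x i‖^2 ≤ ∑ j, ‖x j‖^2 :=
    Finset.single_le_sum (f := fun j => ‖x j‖^2) (fun j _ => by positivity)
      (Finset.mem_univ i)
  simpa [Real.norm_eq_abs] using this

lemma cellV_coord_bound (x : E2) (i : Fin 2) :
    |cellV x i| ≤ 2*π*|Real.sin (2*π*(x i))| := by
  have h2π : (0:ℝ) ≤ 2*π := by positivity
  fin_cases i
  · show |cellV x 0| ≤ 2*π*|Real.sin (2*π*(x 0))|
    have h : cellV x 0 = -(2 * π * Real.sin (2 * π * x 0) * Real.cos (2 * π * x 1)) := by simp [cellV]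
    rw [h, abs_neg, abs_mul, abs_mul]
    rw [abs_of_nonneg h2π]
    have hc : |Real.cos (2*π*x 1)| ≤ 1 := Real.abs_cos_le_one _
    nlinarith [abs_nonneg (Real.sin (2*π*x 0)), abs_nonneg (Real.cos (2*π*x 1)),
      mul_nonneg h2π (abs_nonneg (Real.sin (2*π*x 0)))]
  · show |cellV x 1| ≤ 2*π*|Real.sin (2*π*(x 1))|
    have h : cellV x 1 = 2 * π * Real.cos (2 * π * x 0) * Real.sin (2 * π * x 1) := by simp [cellV]
    rw [h, abs_mul, abs_mul]
    rw [abs_of_nonneg h2π]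
    have hc : |Real.cos (2*π*x 0)| ≤ 1 := Real.abs_cos_le_one _
    nlinarith [abs_nonneg (Real.sin (2*π*x 1)), abs_nonneg (Real.cos (2*π*x 0)),
      mul_nonneg h2π (abs_nonneg (Real.sin (2*π*x 1)))]

lemma coord_ae {A t : ℝ} (hA : 2 ≤ A) {γ : ℝ → E2} (hadm : IsAdmissible cellV A t γ)
    (i : Fin 2) :
    ∀ᵐ s ∂(volume : Measure ℝ), s ∈ Icc (0:ℝ) t →
      ∃ d, HasDerivAt (fun s => γ s i) d s ∧ |d| ≤ 1 + 2*π*A*|Real.sin (2*π*(γ s i))| := by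
  have hA0 : (0:ℝ) ≤ A := by linarith
  filter_upwards [hadm.2] with s hs hmem
  obtain ⟨g, hg, hbd⟩ := hs hmem
  refine ⟨g i, ?_, ?_⟩
  · exact (EuclideanSpace.proj i).hasFDerivAt.comp_hasDerivAt s hg
  · have h1 : |g i + A * cellV (γ s) i| ≤ 1 := by
      have h2 : (g + A • cellV (γ s)) i = g i + A * cellV (γ s) i := rfl
      calc |g i + A * cellV (γ s) i| = |(g + A • cellV (γ s)) i| := by rw [h2]
        _ ≤ ‖g + A • cellV (γ s)‖ := ecoord _ i
        _ ≤ 1 := hbd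
    have h3 := cellV_coord_bound (γ s) i
    calc |g i| = |(g i + A * cellV (γ s) i) - A * cellV (γ s) i| := by ring_nf
      _ ≤ |g i + A * cellV (γ s) i| + |A * cellV (γ s) i| := abs_sub _ _
      _ ≤ 1 + A * (2*π*|Real.sin (2*π*(γ s i))|) := by
          apply add_le_add h1
          rw [abs_mul, abs_of_nonneg hA0]
          exact mul_le_mul_of_nonneg_left h3 hA0
      _ = 1 + 2*π*A*|Real.sin (2*π*(γ s i))| := by ring

lemma lemmaB {A : ℝ} (hA : 2 ≤ A) (t : ℝ) (ht : 0 < t) (u : ℝ → ℝ) (L : NNReal)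
    (hLip : LipschitzOnWith L u (Icc 0 t))
    (hae : ∀ᵐ s ∂(volume : Measure ℝ), s ∈ Icc (0:ℝ) t →
      ∃ d, HasDerivAt u d s ∧ |d| ≤ 1 + 2*π*A*|Real.sin (2*π*(u s))|) :
    |FF A (u t) - FF A (u 0)| ≤ t := by
  have hA0 : (0:ℝ) ≤ A := by linarith
  apply lemmaA t ht (fun s => FF A (u s)) (1 * L)
  · exact (FF_lipschitz hA0).comp_lipschitzOnWith hLip
  · filter_upwards [hae] with s hs hmem
    obtain ⟨d, hd, hbd⟩ := hs hmem
    refine ⟨phi A (u s) * d, (FF_hasDerivAt hA0 (u s)).comp s hd, ?_⟩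
    rw [abs_mul, abs_of_pos (phi_pos hA0 (u s))]
    calc phi A (u s) * |d| ≤ phi A (u s) * (1 + 2*π*A*|Real.sin (2*π*(u s))|) :=
          mul_le_mul_of_nonneg_left hbd (phi_pos hA0 (u s)).le
      _ = 1 := inv_mul_cancel₀ (ne_of_gt (phi_denom_pos hA0 (u s)))

lemma disp {A : ℝ} (hA : 2 ≤ A) {t : ℝ} (ht : 0 < t) {γ : ℝ → E2}
    (hadm : IsAdmissible cellV A t γ) (hγ0 : γ 0 = 0) (i : Fin 2) :
    γ t i ≤ t / FF A 1 + 1 ∧ -(γ t i) ≤ t / FF A 1 + 1 := by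
  have hA0 : (0:ℝ) ≤ A := by linarith
  obtain ⟨L, hL⟩ := hadm.1
  have hLip : LipschitzOnWith (‖(EuclideanSpace.proj (𝕜 := ℝ) i)‖₊ * L)
      (fun s => γ s i) (Icc 0 t) :=
    (EuclideanSpace.proj (𝕜 := ℝ) i).lipschitz.comp_lipschitzOnWith hL
  have hB := lemmaB hA t ht (fun s => γ s i) _ hLip (coord_ae hA hadm i)
  have hu0 : γ 0 i = 0 := by rw [hγ0]; rfl
  have hB : |FF A (γ t i) - FF A (γ 0 i)| ≤ t := hB
  rw [hu0, FF_zero, sub_zero] at hB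
  constructor
  · exact le_of_FF_le hA ht.le (le_trans (le_abs_self _) hB)
  · apply le_of_FF_le hA ht.le
    rw [FF_neg hA0]
    exact le_trans (neg_le_abs _) hB

end Statement18Aux

/-- For the cellular flow: (a) any `A`-admissible control path
(`A ≥ 2`) crossing a vertical strip of width one between integer lines takes time at
least `c·log A / A`; (b) consequently `s_T(p,A) ≤ C·A / log A` for
`p = (±1,0), (0,±1)`. -/
theorem statement18 :
    ∃ c > (0:ℝ), ∃ C > (0:ℝ),
      (∀ A : ℝ, 2 ≤ A → ∀ k : ℤ, ∀ T : ℝ, 0 < T → ∀ γ : ℝ → E2,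
        IsAdmissible cellV A T γ → γ 0 0 = (k : ℝ) → γ T 0 = (k : ℝ) + 1 →
        c * Real.log A / A ≤ T) ∧
      (∀ A : ℝ, 2 ≤ A → ∀ p : E2,
        (p = (WithLp.toLp 2 ![1, 0] : E2) ∨ p = (WithLp.toLp 2 ![-1, 0] : E2) ∨
         p = (WithLp.toLp 2 ![0, 1] : E2) ∨ p = (WithLp.toLp 2 ![0, -1] : E2)) →
        sT cellV p A ≤ C * A / Real.log A) := by
  refine ⟨1/40, by norm_num, 41, by norm_num, ?_, ?_⟩
  · intro A hA k T hT γ hadm h0 hT1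
    have hA0 : (0:ℝ) ≤ A := by linarith
    obtain ⟨L, hL⟩ := hadm.1
    have hLip := (EuclideanSpace.proj (𝕜 := ℝ) (0 : Fin 2)).lipschitz.comp_lipschitzOnWith hL
    have hB := lemmaB hA T hT (fun s => γ s 0) _ hLip (coord_ae hA hadm 0)
    have hB : |FF A (γ T 0) - FF A (γ 0 0)| ≤ T := hB
    rw [h0, hT1, FF_add_one hA0 (k:ℝ), add_sub_cancel_left] at hB
    have h3 : FF A 1 ≤ T := le_trans (le_abs_self _) hB
    calc (1/40) * Real.log A / A = Real.log A / (40*A) := by ring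
      _ ≤ FF A 1 := FF_one_ge hA
      _ ≤ T := h3
  · intro A hA p hp
    have hA0 : (0:ℝ) ≤ A := by linarith
    have hlog : 0 < Real.log A := Real.log_pos (by linarith)
    have hFF1 : 0 < FF A 1 := FF_one_pos hA
    have hub : ∀ t : ℝ, 0 < t → ∀ r ∈ {r : ℝ | ∃ γ : ℝ → E2, IsAdmissible cellV A t γ ∧
        γ 0 = 0 ∧ r = - (inner ℝ p (γ t) : ℝ)}, r ≤ t / FF A 1 + 1 := by
      intro t ht0
      rintro r ⟨γ, hadm, hγ0, rfl⟩
      have hd0 := disp hA ht0 hadm hγ0 0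
      have hd1 := disp hA ht0 hadm hγ0 1
      rcases hp with rfl | rfl | rfl | rfl
      · have h : @inner ℝ E2 _ (WithLp.toLp 2 ![1,0] : E2) (γ t) = γ t 0 := by
          rw [PiLp.inner_apply]
          simp [Fin.sum_univ_two, RCLike.inner_apply]
        rw [h]; exact hd0.2
      · have h : @inner ℝ E2 _ (WithLp.toLp 2 ![-1,0] : E2) (γ t) = -(γ t 0) := by
          rw [PiLp.inner_apply]
          simp [Fin.sum_univ_two, RCLike.inner_apply]
        rw [h, neg_neg]; exact hd0.1
      · have h : @inner ℝ E2 _ (WithLp.toLp 2 ![0,1] : E2) (γ t) = γ t 1 := by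
          rw [PiLp.inner_apply]
          simp [Fin.sum_univ_two, RCLike.inner_apply]
        rw [h]; exact hd1.2
      · have h : @inner ℝ E2 _ (WithLp.toLp 2 ![0,-1] : E2) (γ t) = -(γ t 1) := by
          rw [PiLp.inner_apply]
          simp [Fin.sum_univ_two, RCLike.inner_apply]
        rw [h, neg_neg]; exact hd1.1
    have hzero : ∀ t : ℝ, (0:ℝ) ∈ {r : ℝ | ∃ γ : ℝ → E2, IsAdmissible cellV A t γ ∧
        γ 0 = 0 ∧ r = - (inner ℝ p (γ t) : ℝ)} := by
      intro t
      refine ⟨fun _ => 0, ⟨⟨0, by intro x _ y _; simp⟩, ?_⟩, rfl, by simp⟩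
      apply Filter.Eventually.of_forall
      intro s _
      refine ⟨0, hasDerivAt_const s 0, ?_⟩
      have hV0 : cellV (0 : E2) = 0 := by
        ext i
        fin_cases i <;> simp [cellV]
      rw [hV0]
      simp
    have hev : ∀ᶠ t in (atTop : Filter ℝ),
        (1 / t) * sSup {r : ℝ | ∃ γ : ℝ → E2, IsAdmissible cellV A t γ ∧ γ 0 = 0 ∧
          r = - (inner ℝ p (γ t) : ℝ)} ≤ 1/(FF A 1) + 1 := by
      filter_upwards [eventually_ge_atTop (1:ℝ)] with t ht1
      have ht0 : (0:ℝ) < t := lt_of_lt_of_le one_pos ht1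
      have hsup : sSup {r : ℝ | ∃ γ : ℝ → E2, IsAdmissible cellV A t γ ∧ γ 0 = 0 ∧
          r = - (inner ℝ p (γ t) : ℝ)} ≤ t / FF A 1 + 1 := Real.sSup_le (hub t ht0) (by positivity)
      calc (1/t) * sSup {r : ℝ | ∃ γ : ℝ → E2, IsAdmissible cellV A t γ ∧ γ 0 = 0 ∧
              r = - (inner ℝ p (γ t) : ℝ)}
          ≤ (1/t) * (t/FF A 1 + 1) := mul_le_mul_of_nonneg_left hsup (by positivity)
        _ = 1/FF A 1 + 1/t := by
            field_simp
        _ ≤ 1/FF A 1 + 1 := by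
            have h5 : 1/t ≤ 1 := by rw [div_le_one ht0]; exact ht1
            linarith
    have hev2 : ∀ᶠ t in (atTop : Filter ℝ), (0:ℝ) ≤
        (1 / t) * sSup {r : ℝ | ∃ γ : ℝ → E2, IsAdmissible cellV A t γ ∧ γ 0 = 0 ∧
          r = - (inner ℝ p (γ t) : ℝ)} := by
      filter_upwards [eventually_ge_atTop (1:ℝ)] with t ht1
      have ht0 : (0:ℝ) < t := lt_of_lt_of_le one_pos ht1
      have hbdd : BddAbove {r : ℝ | ∃ γ : ℝ → E2, IsAdmissible cellV A t γ ∧ γ 0 = 0 ∧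
          r = - (inner ℝ p (γ t) : ℝ)} := ⟨t / FF A 1 + 1, hub t ht0⟩
      have h0le : (0:ℝ) ≤ sSup {r : ℝ | ∃ γ : ℝ → E2, IsAdmissible cellV A t γ ∧ γ 0 = 0 ∧
          r = - (inner ℝ p (γ t) : ℝ)} := le_csSup hbdd (hzero t)
      positivity
    have hcb := isCoboundedUnder_le_of_eventually_le (atTop : Filter ℝ) hev2
    have hls := Filter.limsup_le_of_le hcb hev
    rw [sT]
    refine le_trans hls ?_
    have h1 : 1/FF A 1 ≤ 40*A/Real.log A := by
      have h2 : Real.log A/(40*A) ≤ FF A 1 := FF_one_ge hA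
      have h3 : 0 < Real.log A/(40*A) := by positivity
      calc 1/FF A 1 ≤ 1/(Real.log A/(40*A)) := one_div_le_one_div_of_le h3 h2
        _ = 40*A/Real.log A := by rw [one_div_div]
    have h4 : 1 ≤ A/Real.log A := by
      rw [le_div_iff₀ hlog, one_mul]
      have := Real.log_le_sub_one_of_pos (by linarith : (0:ℝ) < A)
      linarith
    calc 1/FF A 1 + 1 ≤ 40*A/Real.log A + A/Real.log A := add_le_add h1 h4
      _ = 41*A/Real.log A := by ring


end
end
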